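/- arXiv:1806.06959 — 5 statements merged into one kernel-verified Lean document; each statement's English description precedes it below -/
import Mathlib

section
/- Let G(t,x) = (2πκt)^{-d/2} exp(-|x|²/(2κt) - λt) 1_{t>0} with κ, λ > 0, and let Δ > 0. Then there is a constant C (depending only on d, κ, λ) such that for all s > Δ, ∫_{ℝ^d} |G(s+Δ, y) - G(s, y)| dy ≤ C (Δ/s) e^{-λs/2}, and for all 0 ≤ s ≤ Δ, ∫_{ℝ^d} |G(s+Δ, y) - G(s, y)| dy ≤ 2. -/
open Real MeasureTheory

lemma gauss_integrable (d : ℕ) {b : ℝ} (hb : 0 < b) :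
    Integrable (fun y : EuclideanSpace ℝ (Fin d) => Real.exp (-b * ‖y‖ ^ 2)) := by
  have h := (GaussianFourier.integrable_cexp_neg_mul_sq_norm_add (V := EuclideanSpace ℝ (Fin d))
    (b := (b : ℂ)) (by simpa using hb) 0 0).norm
  convert h using 2 with y
  rw [Complex.norm_exp]
  norm_num
  left
  norm_cast

lemma gauss_integral (d : ℕ) {b : ℝ} (hb : 0 < b) :
    ∫ y : EuclideanSpace ℝ (Fin d), Real.exp (-b * ‖y‖ ^ 2) = (π / b) ^ ((d : ℝ) / 2) := by
  have h := GaussianFourier.integral_rexp_neg_mul_sq_norm (V := EuclideanSpace ℝ (Fin d)) hb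
  simpa [finrank_euclideanSpace_fin] using h

lemma Ek_integrable (d : ℕ) {κ t : ℝ} (hκ : 0 < κ) (ht : 0 < t) :
    Integrable (fun y : EuclideanSpace ℝ (Fin d) => Real.exp (-‖y‖ ^ 2 / (2 * κ * t))) := by
  have hb : 0 < (2 * κ * t)⁻¹ := by positivity
  have hfun : ∀ y : EuclideanSpace ℝ (Fin d),
      Real.exp (-‖y‖ ^ 2 / (2 * κ * t)) = Real.exp (-(2 * κ * t)⁻¹ * ‖y‖ ^ 2) := by
    intro y; congr 1; field_simp
  simpa only [hfun] using gauss_integrable d hb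

lemma Ek_integral (d : ℕ) {κ t : ℝ} (hκ : 0 < κ) (ht : 0 < t) :
    ∫ y : EuclideanSpace ℝ (Fin d), Real.exp (-‖y‖ ^ 2 / (2 * κ * t))
      = (2 * π * κ * t) ^ ((d : ℝ) / 2) := by
  have hb : 0 < (2 * κ * t)⁻¹ := by positivity
  have hfun : ∀ y : EuclideanSpace ℝ (Fin d),
      Real.exp (-‖y‖ ^ 2 / (2 * κ * t)) = Real.exp (-(2 * κ * t)⁻¹ * ‖y‖ ^ 2) := by
    intro y; congr 1; field_simp
  simp only [hfun]
  rw [gauss_integral d hb]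
  congr 1
  field_simp

lemma pow_one_add_le (d : ℕ) {x : ℝ} (hx : 0 ≤ x) (hx1 : x ≤ 1) :
    (1 + x) ^ d ≤ 1 + 2 ^ d * d * x := by
  induction d with
  | zero => simp
  | succ n ih =>
    have h2 : (0:ℝ) < 2 ^ n := by positivity
    have hb : (0:ℝ) ≤ 1 + x := by linarith
    have hxx : x * x ≤ x := by nlinarith
    have h3 : 2^n * (n:ℝ) * x^2 ≤ 2^n * (n:ℝ) * x := by
      have : x^2 ≤ x := by nlinarith
      exact mul_le_mul_of_nonneg_left this (by positivity)
    have h4 : x ≤ x * 2^n * 2 := by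
      have h1 : (1:ℝ) ≤ 2^n := one_le_pow₀ (by norm_num)
      nlinarith
    calc (1+x)^(n+1) = (1+x)^n * (1+x) := pow_succ _ _
    _ ≤ (1 + 2^n*n*x) * (1+x) := by nlinarith [pow_nonneg hb n]
    _ ≤ 1 + 2^(n+1)*((n:ℝ)+1)*x := by ring_nf; nlinarith [h3, h4]
    _ = 1 + 2^(n+1)*((n+1 : ℕ):ℝ)*x := by push_cast; ring

lemma abs_triple_le {a a' L0 L1 e0 e1 : ℝ} (ha' : 0 ≤ a') (haa : a' ≤ a)
    (hL1 : 0 ≤ L1) (hLL : L1 ≤ L0) (he0 : 0 ≤ e0) (hee : e0 ≤ e1) :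
    |a' * L1 * e1 - a * L0 * e0| ≤
      (a - a') * L1 * e1 + a * L1 * (e1 - e0) + a * (L0 - L1) * e0 := by
  have ha : 0 ≤ a := ha'.trans haa
  have he1 : 0 ≤ e1 := he0.trans hee
  rw [abs_le]
  constructor
  · nlinarith [mul_nonneg (mul_nonneg ha hL1) (sub_nonneg.mpr hee)]
  · nlinarith [mul_nonneg (mul_nonneg (sub_nonneg.mpr haa) hL1) he1,
      mul_nonneg (mul_nonneg ha (sub_nonneg.mpr hLL)) he0]


lemma aux_term1 {R L1 H B : ℝ} (hR : 1 ≤ R) (hRB : R ≤ 1 + B) (hL1 : 0 ≤ L1)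
    (hL1H : L1 ≤ H) (hB : 0 ≤ B) : 2*(R-1)*L1 ≤ 2*B*H := by nlinarith

lemma aux_term2 {A x H : ℝ} (hA : A ≤ 2) (hx : 0 ≤ x) (hH : 0 ≤ H) :
    A*x*H ≤ 2*x*H := by nlinarith [mul_nonneg hx hH]

set_option maxHeartbeats 1000000 in
theorem stmt_7 (d : ℕ) (hd : 1 ≤ d) (κ lam : ℝ) (hκ : 0 < κ) (hlam : 0 < lam)
    (G : ℝ → EuclideanSpace ℝ (Fin d) → ℝ)
    (hG : ∀ t x, G t x = if 0 < t then
      (2 * π * κ * t) ^ (-(d : ℝ) / 2) * Real.exp (-‖x‖ ^ 2 / (2 * κ * t) - lam * t) else 0) :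
    ∃ C : ℝ, 0 < C ∧ ∀ Δ : ℝ, 0 < Δ →
      (∀ s : ℝ, Δ < s →
        ∫ y : EuclideanSpace ℝ (Fin d), |G (s + Δ) y - G s y|
          ≤ C * (Δ / s) * Real.exp (-lam * s / 2)) ∧
      (∀ s : ℝ, 0 ≤ s → s ≤ Δ →
        ∫ y : EuclideanSpace ℝ (Fin d), |G (s + Δ) y - G s y| ≤ 2) := by
  have hπ : 0 < π := pi_pos
  -- reformulate G
  have hGform : ∀ t : ℝ, 0 < t → G t = fun y =>
      ((2*π*κ*t) ^ (-(d:ℝ)/2) * Real.exp (-(lam*t))) * Real.exp (-‖y‖^2/(2*κ*t)) := by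
    intro t ht
    funext y
    rw [hG, if_pos ht, show -‖y‖^2/(2*κ*t) - lam*t = -‖y‖^2/(2*κ*t) + -(lam*t) by ring,
      Real.exp_add]
    ring
  have hGnn : ∀ (t : ℝ) (y : EuclideanSpace ℝ (Fin d)), 0 ≤ G t y := by
    intro t y
    rw [hG]
    split
    · positivity
    · exact le_refl 0
  have hGint : ∀ t : ℝ, 0 < t → Integrable (G t) := by
    intro t ht
    rw [hGform t ht]
    exact (Ek_integrable d hκ ht).const_mul _
  have hGval : ∀ t : ℝ, 0 < t → (∫ y : EuclideanSpace ℝ (Fin d), G t y)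
      = Real.exp (-(lam * t)) := by
    intro t ht
    have hbase : (0:ℝ) < 2*π*κ*t := by positivity
    simp only [hGform t ht]
    rw [integral_const_mul, Ek_integral d hκ ht, mul_assoc, mul_comm (Real.exp _),
      ← mul_assoc, ← Real.rpow_add hbase,
      show (-(d:ℝ)/2 + (d:ℝ)/2) = 0 by ring, Real.rpow_zero, one_mul]
  refine ⟨2^(d+1)*d + 2, by positivity, fun Δ hΔ => ⟨?_, ?_⟩⟩
  · -- main estimate
    intro s hΔs
    have hs : 0 < s := hΔ.trans hΔs
    have ht1 : 0 < s + Δ := by linarith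
    have hb0 : (0:ℝ) < 2*π*κ*s := by positivity
    have hb1 : (0:ℝ) < 2*π*κ*(s+Δ) := by positivity
    set x : ℝ := Δ / s with hxdef
    have hx0 : 0 ≤ x := div_nonneg hΔ.le hs.le
    have hx1 : x ≤ 1 := by rw [hxdef, div_le_one hs]; linarith
    have hΔx : Δ = s * x := by rw [hxdef]; field_simp
    set a : ℝ := (2*π*κ*s) ^ (-(d:ℝ)/2) with hadef
    set a' : ℝ := (2*π*κ*(s+Δ)) ^ (-(d:ℝ)/2) with ha'def
    set I0 : ℝ := (2*π*κ*s) ^ ((d:ℝ)/2) with hI0def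
    set I1 : ℝ := (2*π*κ*(s+Δ)) ^ ((d:ℝ)/2) with hI1def
    set L0 : ℝ := Real.exp (-(lam*s)) with hL0def
    set L1 : ℝ := Real.exp (-(lam*(s+Δ))) with hL1def
    set R : ℝ := (1+x) ^ ((d:ℝ)/2) with hRdef
    have hI0pos : 0 < I0 := Real.rpow_pos_of_pos hb0 _
    have hI1pos : 0 < I1 := Real.rpow_pos_of_pos hb1 _
    have haI0 : a * I0 = 1 := by
      rw [hadef, hI0def, ← Real.rpow_add hb0, show (-(d:ℝ)/2 + (d:ℝ)/2) = 0 by ring,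
        Real.rpow_zero]
    have ha'I1 : a' * I1 = 1 := by
      rw [ha'def, hI1def, ← Real.rpow_add hb1, show (-(d:ℝ)/2 + (d:ℝ)/2) = 0 by ring,
        Real.rpow_zero]
    have hainv : a = I0⁻¹ := by
      rw [hadef, hI0def, show (-(d:ℝ)/2) = -((d:ℝ)/2) by ring, Real.rpow_neg hb0.le]
    have ha'inv : a' = I1⁻¹ := by
      rw [ha'def, hI1def, show (-(d:ℝ)/2) = -((d:ℝ)/2) by ring, Real.rpow_neg hb1.le]
    have hI01 : I0 ≤ I1 := by
      rw [hI0def, hI1def]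
      exact Real.rpow_le_rpow hb0.le (mul_le_mul_of_nonneg_left (by linarith : s ≤ s + Δ) (by positivity : (0:ℝ) ≤ 2*π*κ)) (by positivity)
    have haa' : a' ≤ a := by
      rw [hainv, ha'inv]
      exact inv_anti₀ hI0pos hI01
    have ha'pos : 0 < a' := Real.rpow_pos_of_pos hb1 _
    have hapos : 0 < a := Real.rpow_pos_of_pos hb0 _
    have haI1 : a * I1 = R := by
      rw [hRdef, show (1:ℝ)+x = (2*π*κ*(s+Δ))/(2*π*κ*s) by rw [hxdef]; field_simp,
        Real.div_rpow hb1.le hb0.le, hainv, hI1def, hI0def]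
      ring
    have hLL : L1 ≤ L0 := by
      rw [hL0def, hL1def]
      exact Real.exp_le_exp.mpr (by linarith [mul_le_mul_of_nonneg_left (by linarith : s ≤ s + Δ) hlam.le])
    have hL1pos : 0 < L1 := Real.exp_pos _
    have hL0pos : 0 < L0 := Real.exp_pos _
    -- pointwise bound
    have hptwise : ∀ y : EuclideanSpace ℝ (Fin d), |G (s + Δ) y - G s y| ≤
        ((2*a - a') * L1) * Real.exp (-‖y‖^2/(2*κ*(s+Δ)))
        + (a * (L0 - 2*L1)) * Real.exp (-‖y‖^2/(2*κ*s)) := by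
      intro y
      have h1 : G (s+Δ) y = a' * L1 * Real.exp (-‖y‖^2/(2*κ*(s+Δ))) := by
        rw [hGform (s+Δ) ht1]
      have h0 : G s y = a * L0 * Real.exp (-‖y‖^2/(2*κ*s)) := by
        rw [hGform s hs]
      rw [h1, h0]
      have hee : Real.exp (-‖y‖^2/(2*κ*s)) ≤ Real.exp (-‖y‖^2/(2*κ*(s+Δ))) := by
        apply Real.exp_le_exp.mpr
        rw [neg_div, neg_div, neg_le_neg_iff]
        exact div_le_div_of_nonneg_left (by positivity) (by positivity) (mul_le_mul_of_nonneg_left (by linarith : s ≤ s + Δ) (by positivity : (0:ℝ) ≤ 2*κ))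
      have h2 := abs_triple_le ha'pos.le haa' hL1pos.le hLL
        (Real.exp_pos (-‖y‖^2/(2*κ*s))).le hee
      calc |a' * L1 * Real.exp (-‖y‖^2/(2*κ*(s+Δ))) - a * L0 * Real.exp (-‖y‖^2/(2*κ*s))|
          ≤ (a - a') * L1 * Real.exp (-‖y‖^2/(2*κ*(s+Δ)))
            + a * L1 * (Real.exp (-‖y‖^2/(2*κ*(s+Δ))) - Real.exp (-‖y‖^2/(2*κ*s)))
            + a * (L0 - L1) * Real.exp (-‖y‖^2/(2*κ*s)) := h2
        _ = _ := by ring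
    -- integrability of the bound
    have hE1int := Ek_integrable d hκ ht1 (κ := κ)
    have hE0int := Ek_integrable d hκ hs (κ := κ)
    have hRHSint : Integrable (fun y : EuclideanSpace ℝ (Fin d) =>
        ((2*a - a') * L1) * Real.exp (-‖y‖^2/(2*κ*(s+Δ)))
        + (a * (L0 - 2*L1)) * Real.exp (-‖y‖^2/(2*κ*s))) :=
      (hE1int.const_mul _).add (hE0int.const_mul _)
    have hmono := integral_mono ((hGint (s+Δ) ht1).sub (hGint s hs)).abs hRHSint hptwise
    have hRHSval : (∫ y : EuclideanSpace ℝ (Fin d),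
        (((2*a - a') * L1) * Real.exp (-‖y‖^2/(2*κ*(s+Δ)))
        + (a * (L0 - 2*L1)) * Real.exp (-‖y‖^2/(2*κ*s))))
        = ((2*a - a') * L1) * I1 + (a * (L0 - 2*L1)) * I0 := by
      rw [integral_add (hE1int.const_mul _) (hE0int.const_mul _), integral_const_mul,
        integral_const_mul, Ek_integral d hκ ht1, Ek_integral d hκ hs, ← hI1def, ← hI0def]
    have hsimp : ((2*a - a') * L1) * I1 + (a * (L0 - 2*L1)) * I0
        = 2*(R-1)*L1 + (L0 - L1) := by
      linear_combination (2*L1) * haI1 - L1 * ha'I1 + (L0 - 2*L1) * haI0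
    -- now bound 2(R-1)L1 + (L0 - L1)
    set H : ℝ := Real.exp (-lam * s / 2) with hHdef
    have hHpos : 0 < H := Real.exp_pos _
    have hL0H : L0 ≤ H := by
      rw [hL0def, hHdef]
      exact Real.exp_le_exp.mpr (by linarith [mul_pos hlam hs])
    have hL0HH : L0 = H * H := by
      rw [hL0def, hHdef, ← Real.exp_add]
      congr 1
      ring
    have hR1 : R ≤ 1 + 2^d*d*x := by
      have h1 : R ≤ (1+x) ^ ((d:ℝ)) := by
        rw [hRdef]
        exact Real.rpow_le_rpow_of_exponent_le (by linarith) (by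
          have : (0:ℝ) ≤ (d:ℝ) := Nat.cast_nonneg d
          linarith)
      rw [Real.rpow_natCast] at h1
      exact h1.trans (pow_one_add_le d hx0 hx1)
    have hRge : 1 ≤ R := by
      rw [hRdef]
      have := Real.rpow_le_rpow_of_exponent_le (show (1:ℝ) ≤ 1 + x by linarith)
        (show (0:ℝ) ≤ (d:ℝ)/2 by positivity)
      simpa using this
    have hterm1 : 2*(R-1)*L1 ≤ 2*(2^d*d*x)*H :=
      aux_term1 hRge hR1 hL1pos.le (hLL.trans hL0H) (by positivity)
    have hterm2 : L0 - L1 ≤ 2*x*H := by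
      have hL1eq : L1 = L0 * Real.exp (-(lam*Δ)) := by
        rw [hL0def, hL1def, ← Real.exp_add]
        congr 1
        ring
      have h1e : 1 - Real.exp (-(lam*Δ)) ≤ lam*Δ := by
        linarith [Real.add_one_le_exp (-(lam*Δ))]
      have hstep : L0 - L1 ≤ L0 * (lam*Δ) := by
        calc L0 - L1 = L0 * (1 - Real.exp (-(lam*Δ))) := by rw [hL1eq]; ring
          _ ≤ L0 * (lam*Δ) := mul_le_mul_of_nonneg_left h1e hL0pos.le
      have hsH : lam * s * H ≤ 2 := by
        have hEpos : 0 < Real.exp (lam*s/2) := Real.exp_pos _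
        have hu : lam*s/2 ≤ Real.exp (lam*s/2) := by
          linarith [Real.add_one_le_exp (lam*s/2)]
        have hHinv : H = (Real.exp (lam*s/2))⁻¹ := by
          rw [hHdef, ← Real.exp_neg]
          congr 1
          ring
        rw [hHinv]
        rw [mul_inv_le_iff₀ hEpos]
        linarith
      calc L0 - L1 ≤ L0 * (lam*Δ) := hstep
        _ = (lam*s*H)*x*H := by rw [hL0HH, hΔx]; ring
        _ ≤ 2*x*H := aux_term2 hsH hx0 hHpos.le
    calc ∫ y : EuclideanSpace ℝ (Fin d), |G (s + Δ) y - G s y|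
        ≤ ((2*a - a') * L1) * I1 + (a * (L0 - 2*L1)) * I0 :=
          le_trans hmono (le_of_eq hRHSval)
      _ = 2*(R-1)*L1 + (L0 - L1) := hsimp
      _ ≤ 2*(2^d*d*x)*H + 2*x*H := by linarith
      _ = (2^(d+1)*d + 2) * x * H := by ring
      _ = (2^(d+1)*d + 2) * (Δ / s) * Real.exp (-lam * s / 2) := by rw [hxdef, hHdef]
  · -- easy bound
    intro s hs0 hsΔ
    have ht1 : 0 < s + Δ := by linarith
    rcases eq_or_lt_of_le hs0 with h0 | hs
    · have hGzero : G s = fun _ => (0:ℝ) := by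
        funext y
        rw [hG, if_neg (by rw [← h0]; exact lt_irrefl 0)]
      calc ∫ y : EuclideanSpace ℝ (Fin d), |G (s + Δ) y - G s y|
          = ∫ y : EuclideanSpace ℝ (Fin d), G (s + Δ) y := by
            congr 1
            funext y
            rw [hGzero]
            simp [abs_of_nonneg (hGnn (s+Δ) y)]
        _ = Real.exp (-(lam * (s+Δ))) := hGval (s+Δ) ht1
        _ ≤ 1 := Real.exp_le_one_iff.mpr (by linarith [mul_pos hlam ht1])
        _ ≤ 2 := by norm_num
    · have hbd : ∀ y : EuclideanSpace ℝ (Fin d),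
          |G (s + Δ) y - G s y| ≤ G (s + Δ) y + G s y := by
        intro y
        rw [abs_sub_le_iff]
        constructor
        · linarith [hGnn s y]
        · linarith [hGnn (s+Δ) y]
      have hmono := integral_mono ((hGint (s+Δ) ht1).sub (hGint s hs)).abs
        ((hGint (s+Δ) ht1).add (hGint s hs)) hbd
      simp only [Pi.add_apply, Pi.sub_apply] at hmono
      rw [integral_add (hGint (s+Δ) ht1) (hGint s hs), hGval (s+Δ) ht1, hGval s hs] at hmono
      have h1 : Real.exp (-(lam * (s+Δ))) ≤ 1 := Real.exp_le_one_iff.mpr (by linarith [mul_pos hlam ht1])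
      have h2 : Real.exp (-(lam * s)) ≤ 1 := Real.exp_le_one_iff.mpr (by linarith [mul_pos hlam hs])
      linarith
end

section
/- Let d = 1 and G(t,x) = (2πκt)^{-1/2} exp(-x²/(2κt) - λt) 1_{t>0} with κ, λ > 0. Then there is a constant C such that for all s > 0 and Δ > 0, ∫_ℝ (G(s+Δ, y) - G(s, y))² dy ≤ C Δ² e^{-λs} s^{-5/2}. -/
open Real MeasureTheory

private lemma rpow_neg_half' (x : ℝ) (hx : 0 < x) : x ^ (-(1:ℝ)/2) = 1 / Real.sqrt x := by
  rw [Real.sqrt_eq_rpow, one_div, ← Real.rpow_neg hx.le]; norm_num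

private lemma prod_form (κ lam : ℝ) (hκ : 0 < κ) (t u : ℝ) (ht : 0 < t) (hu : 0 < u) (y : ℝ) :
    ((2*π*κ*t) ^ (-(1:ℝ)/2) * Real.exp (-y^2/(2*κ*t) - lam*t)) *
    ((2*π*κ*u) ^ (-(1:ℝ)/2) * Real.exp (-y^2/(2*κ*u) - lam*u))
    = ((2*π*κ*t) ^ (-(1:ℝ)/2) * (2*π*κ*u) ^ (-(1:ℝ)/2) * Real.exp (-lam*(t+u)))
      * Real.exp (-(1/(2*κ*t)+1/(2*κ*u)) * y^2) := by
  have h1 : (-y^2/(2*κ*t) - lam*t) + (-y^2/(2*κ*u) - lam*u)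
      = (-lam*(t+u)) + (-(1/(2*κ*t)+1/(2*κ*u)) * y^2) := by
    field_simp; ring
  rw [mul_mul_mul_comm, ← Real.exp_add, h1, Real.exp_add]; ring

private lemma b_pos (κ : ℝ) (hκ : 0 < κ) (t u : ℝ) (ht : 0 < t) (hu : 0 < u) :
    0 < 1/(2*κ*t)+1/(2*κ*u) := by positivity

private lemma prod_integrable (κ lam : ℝ) (hκ : 0 < κ)
    (t u : ℝ) (ht : 0 < t) (hu : 0 < u) :
    Integrable (fun y : ℝ => ((2*π*κ*t) ^ (-(1:ℝ)/2) * Real.exp (-y^2/(2*κ*t) - lam*t)) *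
      ((2*π*κ*u) ^ (-(1:ℝ)/2) * Real.exp (-y^2/(2*κ*u) - lam*u))) := by
  simp_rw [prod_form κ lam hκ t u ht hu]
  exact (integrable_exp_neg_mul_sq (b_pos κ hκ t u ht hu)).const_mul _

private lemma prod_integral (κ lam : ℝ) (hκ : 0 < κ)
    (t u : ℝ) (ht : 0 < t) (hu : 0 < u) :
    ∫ y : ℝ, ((2*π*κ*t) ^ (-(1:ℝ)/2) * Real.exp (-y^2/(2*κ*t) - lam*t)) *
      ((2*π*κ*u) ^ (-(1:ℝ)/2) * Real.exp (-y^2/(2*κ*u) - lam*u))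
    = (2*π*κ*(t+u)) ^ (-(1:ℝ)/2) * Real.exp (-lam*(t+u)) := by
  have hπ : 0 < π := Real.pi_pos
  simp_rw [prod_form κ lam hκ t u ht hu]
  rw [integral_const_mul, integral_gaussian]
  have hb := b_pos κ hκ t u ht hu
  have htu : 0 < t + u := by linarith
  have hπb : π / (1/(2*κ*t)+1/(2*κ*u)) = (2*π*κ*t) * (2*π*κ*u) / (2*π*κ*(t+u)) := by
    field_simp; ring
  rw [hπb, rpow_neg_half' _ (by positivity), rpow_neg_half' _ (by positivity),
    rpow_neg_half' _ (by positivity),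
    Real.sqrt_div (by positivity), Real.sqrt_mul (by positivity)]
  have s1 : 0 < Real.sqrt (2*π*κ*t) := Real.sqrt_pos.mpr (by positivity)
  have s2 : 0 < Real.sqrt (2*π*κ*u) := Real.sqrt_pos.mpr (by positivity)
  have s3 : 0 < Real.sqrt (2*π*κ*(t+u)) := Real.sqrt_pos.mpr (by positivity)
  field_simp
  rw [show (2:ℝ)^2*π^2*κ^2*u*t = (2*π*κ*t)*(2*π*κ*u) by ring, Real.sqrt_mul (by positivity),
    Real.sqrt_mul (x := 2*π*κ) (by positivity) t]

private lemma h0_deriv (lam : ℝ) (x : ℝ) (hx : 0 < x) :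
    HasDerivAt (fun r : ℝ => r ^ (-(1:ℝ)/2) * Real.exp (-lam*r))
      ((-(1:ℝ)/2 * x ^ (-(3:ℝ)/2) + x ^ (-(1:ℝ)/2) * (-lam)) * Real.exp (-lam*x)) x := by
  have h1 : HasDerivAt (fun r : ℝ => r ^ (-(1:ℝ)/2)) ((-(1:ℝ)/2) * x ^ (-(3:ℝ)/2)) x := by
    have h := Real.hasDerivAt_rpow_const (x := x) (p := -(1:ℝ)/2) (Or.inl hx.ne')
    rw [show (-(1:ℝ)/2 - 1) = -(3:ℝ)/2 by norm_num] at h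
    exact h
  have hlin : HasDerivAt (fun r : ℝ => -lam*r) (-lam) x := by
    simpa using (hasDerivAt_id x).const_mul (-lam)
  have h2 : HasDerivAt (fun r : ℝ => Real.exp (-lam*r)) ((-lam) * Real.exp (-lam*x)) x := by
    simpa [mul_comm] using hlin.exp
  have := h1.mul h2
  exact this.congr_deriv (by ring)

private lemma h1_deriv (lam : ℝ) (x : ℝ) (hx : 0 < x) :
    HasDerivAt (fun r : ℝ => (-(1:ℝ)/2 * r ^ (-(3:ℝ)/2) + r ^ (-(1:ℝ)/2) * (-lam)) * Real.exp (-lam*r))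
      ((((3:ℝ)/4) * x ^ (-(5:ℝ)/2) + lam * x ^ (-(3:ℝ)/2) + lam^2 * x ^ (-(1:ℝ)/2)) * Real.exp (-lam*x)) x := by
  have h1 : HasDerivAt (fun r : ℝ => r ^ (-(3:ℝ)/2)) ((-(3:ℝ)/2) * x ^ (-(5:ℝ)/2)) x := by
    have h := Real.hasDerivAt_rpow_const (x := x) (p := -(3:ℝ)/2) (Or.inl hx.ne')
    rw [show (-(3:ℝ)/2 - 1) = -(5:ℝ)/2 by norm_num] at h
    exact h
  have h2 : HasDerivAt (fun r : ℝ => r ^ (-(1:ℝ)/2)) ((-(1:ℝ)/2) * x ^ (-(3:ℝ)/2)) x := by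
    have h := Real.hasDerivAt_rpow_const (x := x) (p := -(1:ℝ)/2) (Or.inl hx.ne')
    rw [show (-(1:ℝ)/2 - 1) = -(3:ℝ)/2 by norm_num] at h
    exact h
  have hlin : HasDerivAt (fun r : ℝ => -lam*r) (-lam) x := by
    simpa using (hasDerivAt_id x).const_mul (-lam)
  have hexp : HasDerivAt (fun r : ℝ => Real.exp (-lam*r)) ((-lam) * Real.exp (-lam*x)) x := by
    simpa [mul_comm] using hlin.exp
  have hin : HasDerivAt (fun r : ℝ => -(1:ℝ)/2 * r ^ (-(3:ℝ)/2) + r ^ (-(1:ℝ)/2) * (-lam))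
      (-(1:ℝ)/2 * ((-(3:ℝ)/2) * x ^ (-(5:ℝ)/2)) + ((-(1:ℝ)/2) * x ^ (-(3:ℝ)/2)) * (-lam)) x :=
    (h1.const_mul _).add (h2.mul_const _)
  have := hin.mul hexp
  exact this.congr_deriv (by ring)

private lemma second_diff {f f' f'' : ℝ → ℝ} {a Δ M : ℝ} (ha : 0 < a) (hΔ : 0 < Δ)
    (hd1 : ∀ x, 0 < x → HasDerivAt f (f' x) x)
    (hd2 : ∀ x, 0 < x → HasDerivAt f' (f'' x) x)
    (hM : ∀ x, a ≤ x → x ≤ a + 2*Δ → f'' x ≤ M) :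
    f (a + 2*Δ) - 2 * f (a + Δ) + f a ≤ M * Δ^2 := by
  have hgd : ∀ x, 0 < x → HasDerivAt (fun x => f (x + Δ) - f x) (f' (x + Δ) - f' x) x := by
    intro x hx
    have h1 : HasDerivAt (fun y : ℝ => f (y + Δ)) (f' (x + Δ)) x := by
      have := (hd1 (x + Δ) (by linarith)).comp x ((hasDerivAt_id x).add_const Δ)
      exact this.congr_deriv (mul_one _)
    exact h1.sub (hd1 x hx)
  obtain ⟨c, hc, hceq⟩ := exists_hasDerivAt_eq_slope (fun x => f (x + Δ) - f x)
    (fun x => f' (x + Δ) - f' x)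
    (show a < a + Δ by linarith)
    (fun x hx => ((hgd x (lt_of_lt_of_le ha hx.1)).continuousAt).continuousWithinAt)
    (fun x hx => hgd x (lt_trans ha hx.1))
  obtain ⟨d, hd, hdeq⟩ := exists_hasDerivAt_eq_slope f' f''
    (show c < c + Δ by linarith)
    (fun x hx => ((hd2 x (lt_of_lt_of_le (lt_trans ha hc.1) hx.1)).continuousAt).continuousWithinAt)
    (fun x hx => hd2 x (lt_trans (lt_trans ha hc.1) hx.1))
  have hdM : f'' d ≤ M := hM d (by linarith [hc.1, hd.1]) (by linarith [hc.2, hd.2])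
  have hΔne : Δ ≠ 0 := hΔ.ne'
  have e1 : (f (a + Δ + Δ) - f (a + Δ)) - (f (a + Δ) - f a) = (f' (c + Δ) - f' c) * Δ := by
    rw [hceq, add_sub_cancel_left, div_mul_cancel₀ _ hΔne]
  have e2 : f' (c + Δ) - f' c = f'' d * Δ := by
    rw [hdeq, add_sub_cancel_left, div_mul_cancel₀ _ hΔne]
  have key : f (a + 2*Δ) - 2 * f (a + Δ) + f a = f'' d * Δ * Δ := by
    rw [← e2, ← e1, show a + Δ + Δ = a + 2*Δ by ring]; ring
  rw [key]
  nlinarith [mul_le_mul_of_nonneg_right (mul_le_mul_of_nonneg_right hdM hΔ.le) hΔ.le]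

set_option maxHeartbeats 1000000 in
theorem stmt_9 (κ lam : ℝ) (hκ : 0 < κ) (hlam : 0 < lam)
    (G : ℝ → ℝ → ℝ)
    (hG : ∀ t x, G t x = if 0 < t then
      (2 * π * κ * t) ^ (-(1 : ℝ) / 2) * Real.exp (-x ^ 2 / (2 * κ * t) - lam * t) else 0) :
    ∃ C : ℝ, ∀ (s Δ : ℝ), 0 < s → 0 < Δ →
      ∫ y : ℝ, (G (s + Δ) y - G s y) ^ 2
        ≤ C * Δ ^ 2 * Real.exp (-lam * s) * s ^ (-(5 : ℝ) / 2) := by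
  have hπ : 0 < π := Real.pi_pos
  have hπκ : 0 < 2*π*κ := by positivity
  have hcpos : 0 < (2*π*κ) ^ (-(1:ℝ)/2) := Real.rpow_pos_of_pos hπκ _
  refine ⟨6 * (2*π*κ) ^ (-(1:ℝ)/2), ?_⟩
  intro s Δ hs hΔ
  have hsΔ : 0 < s + Δ := by linarith
  have hval : ∀ r : ℝ, 0 < r → (2*π*κ*r) ^ (-(1:ℝ)/2) = (2*π*κ) ^ (-(1:ℝ)/2) * r ^ (-(1:ℝ)/2) := by
    intro r hr
    rw [← Real.mul_rpow hπκ.le hr.le]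
  -- compute the integral
  have i1 := prod_integrable κ lam hκ (s+Δ) (s+Δ) hsΔ hsΔ
  have i2 := prod_integrable κ lam hκ (s+Δ) s hsΔ hs
  have i3 := prod_integrable κ lam hκ s s hs hs
  have i2' : Integrable (fun y : ℝ => 2 * (((2*π*κ*(s+Δ)) ^ (-(1:ℝ)/2) * Real.exp (-y^2/(2*κ*(s+Δ)) - lam*(s+Δ))) *
      ((2*π*κ*s) ^ (-(1:ℝ)/2) * Real.exp (-y^2/(2*κ*s) - lam*s)))) := i2.const_mul 2
  have i12 : Integrable (fun y : ℝ =>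
      ((2*π*κ*(s+Δ)) ^ (-(1:ℝ)/2) * Real.exp (-y^2/(2*κ*(s+Δ)) - lam*(s+Δ))) *
      ((2*π*κ*(s+Δ)) ^ (-(1:ℝ)/2) * Real.exp (-y^2/(2*κ*(s+Δ)) - lam*(s+Δ)))
      - 2 * (((2*π*κ*(s+Δ)) ^ (-(1:ℝ)/2) * Real.exp (-y^2/(2*κ*(s+Δ)) - lam*(s+Δ))) *
      ((2*π*κ*s) ^ (-(1:ℝ)/2) * Real.exp (-y^2/(2*κ*s) - lam*s)))) := i1.sub i2'
  have key : ∫ y : ℝ, (G (s + Δ) y - G s y) ^ 2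
      = (2*π*κ) ^ (-(1:ℝ)/2) *
        (((2*s+2*Δ) ^ (-(1:ℝ)/2) * Real.exp (-lam*(2*s+2*Δ)))
         - 2 * ((2*s+Δ) ^ (-(1:ℝ)/2) * Real.exp (-lam*(2*s+Δ)))
         + ((2*s) ^ (-(1:ℝ)/2) * Real.exp (-lam*(2*s)))) := by
    have hsq : ∀ y : ℝ, (G (s + Δ) y - G s y) ^ 2
        = ((2*π*κ*(s+Δ)) ^ (-(1:ℝ)/2) * Real.exp (-y^2/(2*κ*(s+Δ)) - lam*(s+Δ))) *
          ((2*π*κ*(s+Δ)) ^ (-(1:ℝ)/2) * Real.exp (-y^2/(2*κ*(s+Δ)) - lam*(s+Δ)))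
        - 2 * (((2*π*κ*(s+Δ)) ^ (-(1:ℝ)/2) * Real.exp (-y^2/(2*κ*(s+Δ)) - lam*(s+Δ))) *
          ((2*π*κ*s) ^ (-(1:ℝ)/2) * Real.exp (-y^2/(2*κ*s) - lam*s)))
        + ((2*π*κ*s) ^ (-(1:ℝ)/2) * Real.exp (-y^2/(2*κ*s) - lam*s)) *
          ((2*π*κ*s) ^ (-(1:ℝ)/2) * Real.exp (-y^2/(2*κ*s) - lam*s)) := by
      intro y
      rw [hG (s+Δ), hG s, if_pos hsΔ, if_pos hs]; ring
    rw [integral_congr_ae (Filter.Eventually.of_forall hsq),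
      integral_add i12 i3, integral_sub i1 i2', integral_const_mul,
      prod_integral κ lam hκ (s+Δ) (s+Δ) hsΔ hsΔ,
      prod_integral κ lam hκ (s+Δ) s hsΔ hs,
      prod_integral κ lam hκ s s hs hs,
      show (s+Δ)+(s+Δ) = 2*s+2*Δ by ring, show (s+Δ)+s = 2*s+Δ by ring,
      show s+s = 2*s by ring,
      hval _ (by linarith), hval _ (by linarith), hval _ (by linarith)]
    ring
  rw [key]
  -- second difference bound on h₀(r) = r^{-1/2} e^{-λ r}
  have hM : ∀ x, 2*s ≤ x → x ≤ 2*s + 2*Δ →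
      (((3:ℝ)/4) * x ^ (-(5:ℝ)/2) + lam * x ^ (-(3:ℝ)/2) + lam^2 * x ^ (-(1:ℝ)/2)) * Real.exp (-lam*x)
      ≤ 6 * Real.exp (-lam*s) * s ^ (-(5:ℝ)/2) := by
    intro x hx1 hx2
    have hxpos : 0 < x := by linarith
    have hxs : s ≤ x := by linarith
    have hexp : Real.exp (-lam*x) ≤ Real.exp (-lam*s) * Real.exp (-lam*s) := by
      rw [← Real.exp_add]
      apply Real.exp_le_exp.mpr
      nlinarith
    have p1 : x ^ (-(5:ℝ)/2) ≤ s ^ (-(5:ℝ)/2) := Real.rpow_le_rpow_of_nonpos hs hxs (by norm_num)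
    have p2 : x ^ (-(3:ℝ)/2) ≤ s ^ (-(3:ℝ)/2) := Real.rpow_le_rpow_of_nonpos hs hxs (by norm_num)
    have p3 : x ^ (-(1:ℝ)/2) ≤ s ^ (-(1:ℝ)/2) := Real.rpow_le_rpow_of_nonpos hs hxs (by norm_num)
    have q2 : s ^ (-(3:ℝ)/2) = s * s ^ (-(5:ℝ)/2) := by
      rw [show (-(3:ℝ)/2) = 1 + (-(5:ℝ)/2) by norm_num, Real.rpow_add hs, Real.rpow_one]
    have q3 : s ^ (-(1:ℝ)/2) = s^2 * s ^ (-(5:ℝ)/2) := by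
      rw [show (-(1:ℝ)/2) = (2:ℝ) + (-(5:ℝ)/2) by norm_num, Real.rpow_add hs,
        show ((2:ℝ)) = ((2:ℕ):ℝ) by norm_num, Real.rpow_natCast]
    have hes1 : lam * s * Real.exp (-lam*s) ≤ 1 := by
      have h1 := Real.add_one_le_exp (lam * s)
      have he : 0 < Real.exp (lam*s) := Real.exp_pos _
      rw [show -lam*s = -(lam*s) by ring, Real.exp_neg, mul_inv_le_iff₀ he]
      nlinarith
    have hes2 : lam^2 * s^2 * Real.exp (-lam*s) ≤ 4 := by
      have h1 := Real.quadratic_le_exp_of_nonneg (show (0:ℝ) ≤ lam*s by positivity)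
      have he : 0 < Real.exp (lam*s) := Real.exp_pos _
      rw [show -lam*s = -(lam*s) by ring, Real.exp_neg, mul_inv_le_iff₀ he]
      nlinarith
    have hx5 : 0 < s ^ (-(5:ℝ)/2) := Real.rpow_pos_of_pos hs _
    have hexp0 : 0 < Real.exp (-lam*x) := Real.exp_pos _
    have hexps : 0 < Real.exp (-lam*s) := Real.exp_pos _
    calc (((3:ℝ)/4) * x ^ (-(5:ℝ)/2) + lam * x ^ (-(3:ℝ)/2) + lam^2 * x ^ (-(1:ℝ)/2)) * Real.exp (-lam*x)
        ≤ (((3:ℝ)/4) * s ^ (-(5:ℝ)/2) + lam * s ^ (-(3:ℝ)/2) + lam^2 * s ^ (-(1:ℝ)/2)) * (Real.exp (-lam*s) * Real.exp (-lam*s)) := by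
          apply mul_le_mul _ hexp hexp0.le _
          · have hl2 : (0:ℝ) ≤ lam^2 := sq_nonneg _
            nlinarith [mul_le_mul_of_nonneg_left p2 hlam.le, mul_le_mul_of_nonneg_left p3 hl2]
          · have h3 : 0 < s ^ (-(3:ℝ)/2) := Real.rpow_pos_of_pos hs _
            have h1 : 0 < s ^ (-(1:ℝ)/2) := Real.rpow_pos_of_pos hs _
            positivity
      _ = (((3:ℝ)/4) + lam * s + lam^2 * s^2) * Real.exp (-lam*s) * (Real.exp (-lam*s) * s ^ (-(5:ℝ)/2)) := by
          rw [q2, q3]; ring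
      _ ≤ 6 * (Real.exp (-lam*s) * s ^ (-(5:ℝ)/2)) := by
          have he1 : Real.exp (-lam*s) ≤ 1 := by
            rw [Real.exp_le_one_iff]; nlinarith
          have hb : (((3:ℝ)/4) + lam * s + lam^2 * s^2) * Real.exp (-lam*s) ≤ 6 := by
            nlinarith [hes1, hes2, he1, hexps.le]
          have hnn : (0:ℝ) ≤ Real.exp (-lam*s) * s ^ (-(5:ℝ)/2) := by positivity
          nlinarith [mul_le_mul_of_nonneg_right hb hnn]
      _ = 6 * Real.exp (-lam*s) * s ^ (-(5:ℝ)/2) := by ring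
  have sd := second_diff (f := fun r : ℝ => r ^ (-(1:ℝ)/2) * Real.exp (-lam*r))
    (f' := fun x => (-(1:ℝ)/2 * x ^ (-(3:ℝ)/2) + x ^ (-(1:ℝ)/2) * (-lam)) * Real.exp (-lam*x))
    (f'' := fun x => (((3:ℝ)/4) * x ^ (-(5:ℝ)/2) + lam * x ^ (-(3:ℝ)/2) + lam^2 * x ^ (-(1:ℝ)/2)) * Real.exp (-lam*x))
    (a := 2*s) (Δ := Δ) (M := 6 * Real.exp (-lam*s) * s ^ (-(5:ℝ)/2))
    (by linarith) hΔ (fun x hx => h0_deriv lam x hx) (fun x hx => h1_deriv lam x hx) hM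
  calc (2*π*κ) ^ (-(1:ℝ)/2) *
        (((2*s+2*Δ) ^ (-(1:ℝ)/2) * Real.exp (-lam*(2*s+2*Δ)))
         - 2 * ((2*s+Δ) ^ (-(1:ℝ)/2) * Real.exp (-lam*(2*s+Δ)))
         + ((2*s) ^ (-(1:ℝ)/2) * Real.exp (-lam*(2*s))))
      ≤ (2*π*κ) ^ (-(1:ℝ)/2) * (6 * Real.exp (-lam*s) * s ^ (-(5:ℝ)/2) * Δ^2) := by
        apply mul_le_mul_of_nonneg_left _ hcpos.le
        exact sd
    _ = 6 * (2*π*κ) ^ (-(1:ℝ)/2) * Δ^2 * Real.exp (-lam*s) * s ^ (-(5:ℝ)/2) := by ring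
end

section
/- Let λ, κ > 0, α ∈ (0,2), d ≥ 1, and set R(τ) = ∫_{ℝ^d} (1 - e^{-(λ + 2π²κ|ξ|²)τ}) / (λ + 2π²κ|ξ|²) · |ξ|^{α-d} dξ for τ ≥ 0. Then R(τ) = (π^{d/2-α} Γ(α/2)) / ((2κ)^{α/2} Γ(d/2) λ^{1-α/2}) · γ(1 - α/2, λτ), where γ(a,x) = ∫_0^x e^{-u}u^{a-1} du is the lower incomplete Gamma function. -/
open Real MeasureTheory Set


lemma aux_exp_int {a τ : ℝ} (ha : 0 < a) (hτ : 0 ≤ τ) :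
    ∫ t in Set.Ioc (0:ℝ) τ, Real.exp (-(a*t)) = (1 - Real.exp (-(a*τ)))/a := by
  rw [← intervalIntegral.integral_of_le hτ]
  have h : ∀ t ∈ uIcc (0:ℝ) τ, HasDerivAt (fun t => -a⁻¹ * Real.exp (-(a*t)))
      (Real.exp (-(a*t))) t := by
    intro t _
    have h1 : HasDerivAt (fun t : ℝ => -(a*t)) (-a) t := by
      simpa using ((hasDerivAt_id t).const_mul a).fun_neg
    have := (h1.exp).const_mul (-a⁻¹)
    refine this.congr_deriv ?_
    rw [mul_comm (Real.exp _), ← mul_assoc, neg_mul_neg, inv_mul_cancel₀ ha.ne', one_mul]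
  rw [intervalIntegral.integral_eq_sub_of_hasDerivAt h
    (Continuous.intervalIntegrable (by continuity) _ _)]
  simp only [mul_zero, neg_zero, Real.exp_zero, mul_one]
  field_simp
  ring

lemma aux_gauss {b s : ℝ} (hb : 0 < b) (hs : -1 < s) :
    ∫ y in Set.Ioi (0:ℝ), y ^ s * Real.exp (-(b*y^2)) =
      b ^ (-(s+1)/2) * (1/2) * Real.Gamma ((s+1)/2) := by
  rw [← integral_rpow_mul_exp_neg_mul_rpow two_pos hs hb]
  refine setIntegral_congr_fun measurableSet_Ioi (fun y hy => ?_)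
  rw [Real.rpow_two, neg_mul]

lemma aux_gauss_integrable {b s : ℝ} (hb : 0 < b) (hs : -1 < s) :
    IntegrableOn (fun y => y ^ s * Real.exp (-(b*y^2))) (Set.Ioi (0:ℝ)) := by
  have := integrableOn_rpow_mul_exp_neg_mul_rpow hs two_pos hb
  refine this.congr_fun (fun y hy => ?_) measurableSet_Ioi
  beta_reduce
  rw [Real.rpow_two, neg_mul]


lemma aux_ioc_integrable {lam s τ : ℝ} (hs : -1 < s) :
    IntegrableOn (fun t => Real.exp (-(lam*t)) * t ^ s) (Set.Ioc (0:ℝ) τ) := by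
  rcases le_or_gt τ 0 with h | h
  · rw [Ioc_eq_empty (by exact not_lt.mpr h)]
    simp
  · have h1 : IntervalIntegrable (fun t : ℝ => t ^ s) volume 0 τ :=
      intervalIntegral.intervalIntegrable_rpow' hs
    have h2 : IntervalIntegrable (fun t => Real.exp (-(lam*t)) * t ^ s) volume 0 τ :=
      h1.continuousOn_mul (Continuous.continuousOn (by continuity))
    exact (intervalIntegrable_iff_integrableOn_Ioc_of_le h.le).mp h2

lemma aux_subst {lam s τ : ℝ} (hlam : 0 < lam) (hτ : 0 ≤ τ) :
    ∫ t in Set.Ioc (0:ℝ) τ, Real.exp (-(lam*t)) * t ^ s =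
      lam ^ (-s - 1) * ∫ u in Set.Ioc (0:ℝ) (lam*τ), Real.exp (-u) * u ^ s := by
  have key : ∫ t in (0:ℝ)..τ, (fun u => Real.exp (-u) * u ^ s) (lam * t) =
      lam⁻¹ • ∫ u in (lam*0)..(lam*τ), Real.exp (-u) * u ^ s := by
    exact intervalIntegral.integral_comp_mul_left (fun u => Real.exp (-u) * u ^ s) hlam.ne'
  rw [← intervalIntegral.integral_of_le hτ, ← intervalIntegral.integral_of_le
    (by positivity : (0:ℝ) ≤ lam * τ)]
  have congr1 : ∫ t in (0:ℝ)..τ, Real.exp (-(lam*t)) * t ^ s =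
      lam ^ (-s) * ∫ t in (0:ℝ)..τ, (fun u => Real.exp (-u) * u ^ s) (lam * t) := by
    rw [← intervalIntegral.integral_const_mul]
    rw [intervalIntegral.integral_of_le hτ, intervalIntegral.integral_of_le hτ]
    refine setIntegral_congr_fun measurableSet_Ioc (fun t ht => ?_)
    simp only
    rw [Real.mul_rpow hlam.le ht.1.le]
    have : lam ^ (-s) * lam ^ s = 1 := by
      rw [← Real.rpow_add hlam]; simp
    linear_combination (-(Real.exp (-(lam*t)) * t ^ s)) * this
  rw [congr1, key, mul_zero, smul_eq_mul, ← mul_assoc]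
  congr 1
  rw [← Real.rpow_neg_one lam, ← Real.rpow_add hlam]
  ring_nf

lemma aux_fubini {c lam τ α : ℝ} (hc : 0 < c) (hlam : 0 < lam) (hα : 0 < α)
    (hα2 : α < 2) (hτ : 0 ≤ τ) :
    ∫ y in Set.Ioi (0:ℝ),
        y ^ (α-1) * ((1 - Real.exp (-((lam + c*y^2)*τ)))/(lam + c*y^2)) =
      (c ^ (-(α/2)) * (1/2) * Real.Gamma (α/2)) *
        ∫ t in Set.Ioc (0:ℝ) τ, Real.exp (-(lam*t)) * t ^ (-(α/2)) := by
  have hs : (-1:ℝ) < α - 1 := by linarith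
  have hs2 : (-1:ℝ) < -(α/2) := by linarith
  have hΓ : 0 < Real.Gamma (α/2) := Real.Gamma_pos_of_pos (by linarith)
  have hKpos : 0 < c ^ (-(α/2)) * (1/2) * Real.Gamma (α/2) := by positivity
  set K := c ^ (-(α/2)) * (1/2) * Real.Gamma (α/2) with hK
  have hapos : ∀ y : ℝ, 0 < lam + c*y^2 := fun y => by positivity
  -- nonnegativity of integrand
  have hnn : ∀ y ∈ Set.Ioi (0:ℝ),
      0 ≤ y ^ (α-1) * ((1 - Real.exp (-((lam + c*y^2)*τ)))/(lam + c*y^2)) := by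
    intro y hy
    have h1 : Real.exp (-((lam + c*y^2)*τ)) ≤ 1 :=
      Real.exp_le_one_iff.mpr (by nlinarith [hapos y])
    have := (hapos y)
    have h2 : 0 ≤ (1 - Real.exp (-((lam + c*y^2)*τ)))/(lam + c*y^2) :=
      div_nonneg (by linarith) (hapos y).le
    exact mul_nonneg (Real.rpow_nonneg (le_of_lt hy) _) h2
  -- step 1 : to lintegral
  rw [integral_eq_lintegral_of_nonneg_ae
    ((ae_restrict_iff' measurableSet_Ioi).mpr (ae_of_all _ hnn))
    (by fun_prop : Measurable fun y : ℝ =>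
      y ^ (α-1) * ((1 - Real.exp (-((lam + c*y^2)*τ)))/(lam + c*y^2))).aestronglyMeasurable]
  -- step 2 : pointwise rewrite to inner lintegral
  have step2 : ∀ y ∈ Set.Ioi (0:ℝ),
      ENNReal.ofReal (y ^ (α-1) * ((1 - Real.exp (-((lam + c*y^2)*τ)))/(lam + c*y^2)))
        = ∫⁻ t in Set.Ioc (0:ℝ) τ,
            ENNReal.ofReal (y ^ (α-1) * Real.exp (-((lam + c*y^2)*t))) := by
    intro y hy
    have hint : ∫ t in Set.Ioc (0:ℝ) τ, y ^ (α-1) * Real.exp (-((lam + c*y^2)*t))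
        = y ^ (α-1) * ((1 - Real.exp (-((lam + c*y^2)*τ)))/(lam + c*y^2)) := by
      rw [MeasureTheory.integral_const_mul, aux_exp_int (hapos y) hτ]
    rw [← hint]
    refine MeasureTheory.ofReal_integral_eq_lintegral_ofReal ?_ ?_
    · exact Integrable.const_mul (Continuous.integrableOn_Ioc (f := fun t => Real.exp (-((lam + c*y^2)*t))) (by fun_prop)) _
    · exact ae_of_all _ fun t =>
        mul_nonneg (Real.rpow_nonneg (le_of_lt hy) _) (Real.exp_pos _).le
  rw [setLIntegral_congr_fun measurableSet_Ioi step2]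
  -- step 3 : swap
  rw [lintegral_lintegral_swap (by fun_prop : Measurable fun p : ℝ × ℝ =>
      ENNReal.ofReal (p.1 ^ (α-1) * Real.exp (-((lam + c*p.1^2)*p.2)))).aemeasurable]
  -- step 4 : compute inner integral
  have step4 : ∀ t ∈ Set.Ioc (0:ℝ) τ,
      (∫⁻ y in Set.Ioi (0:ℝ),
          ENNReal.ofReal (y ^ (α-1) * Real.exp (-((lam + c*y^2)*t))))
        = ENNReal.ofReal (K * (Real.exp (-(lam*t)) * t ^ (-(α/2)))) := by
    intro t ht
    have hct : 0 < c * t := mul_pos hc ht.1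
    have heq : ∀ y : ℝ, y ^ (α-1) * Real.exp (-((lam + c*y^2)*t))
        = Real.exp (-(lam*t)) * (y ^ (α-1) * Real.exp (-((c*t)*y^2))) := by
      intro y
      rw [show -((lam + c*y^2)*t) = -(lam*t) + -((c*t)*y^2) by ring, Real.exp_add]
      ring
    simp only [heq]
    rw [← MeasureTheory.ofReal_integral_eq_lintegral_ofReal
      ((aux_gauss_integrable hct hs).const_mul _)
      ((ae_restrict_iff' measurableSet_Ioi).mpr (ae_of_all _ fun y hy =>
        mul_nonneg (Real.exp_pos _).le
          (mul_nonneg (Real.rpow_nonneg (le_of_lt hy) _) (Real.exp_pos _).le)))]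
    congr 1
    rw [MeasureTheory.integral_const_mul, aux_gauss hct hs,
      show α - 1 + 1 = α by ring, Real.mul_rpow hc.le ht.1.le]
    rw [show -α/2 = -(α/2) by ring]
    ring
  rw [setLIntegral_congr_fun measurableSet_Ioc step4]
  -- step 5 : back to Bochner
  rw [← MeasureTheory.ofReal_integral_eq_lintegral_ofReal
    (((aux_ioc_integrable hs2 (lam := lam) (τ := τ))).const_mul _)
    ((ae_restrict_iff' measurableSet_Ioc).mpr (ae_of_all _ fun t ht => by
      have := ht.1; positivity))]
  rw [ENNReal.toReal_ofReal (by
    apply setIntegral_nonneg measurableSet_Ioc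
    intro t ht
    have h0 := ht.1
    have : (0:ℝ) ≤ Real.exp (-(lam*t)) * t ^ (-(α/2)) :=
      mul_nonneg (Real.exp_pos _).le (Real.rpow_nonneg h0.le _)
    exact mul_nonneg hKpos.le this), MeasureTheory.integral_const_mul]

lemma aux_const {d : ℕ} (hd : 1 ≤ d) {α κ lam : ℝ} (hκ : 0 < κ) (hlam : 0 < lam)
    (hα : 0 < α) (hα2 : α < 2) :
    (d:ℝ) * (Real.sqrt π ^ d / Real.Gamma ((d:ℝ)/2+1)) *
        ((2*π^2*κ) ^ (-(α/2)) * (1/2) * Real.Gamma (α/2)) * lam ^ (-(-(α/2)) - 1)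
      = π ^ ((d:ℝ)/2 - α) * Real.Gamma (α/2)
          / ((2*κ) ^ (α/2) * Real.Gamma ((d:ℝ)/2) * lam ^ (1 - α/2)) := by
  have hπ := Real.pi_pos
  have hd2 : (0:ℝ) < (d:ℝ)/2 := by
    have : (1:ℝ) ≤ (d:ℝ) := by exact_mod_cast hd
    linarith
  have hΓd : 0 < Real.Gamma ((d:ℝ)/2) := Real.Gamma_pos_of_pos hd2
  have h1 : Real.sqrt π ^ d = π ^ ((d:ℝ)/2) := by
    rw [Real.sqrt_eq_rpow, ← Real.rpow_natCast (π ^ ((1:ℝ)/2)) d,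
      ← Real.rpow_mul hπ.le]
    congr 1; ring
  have h2 : Real.Gamma ((d:ℝ)/2+1) = ((d:ℝ)/2) * Real.Gamma ((d:ℝ)/2) :=
    Real.Gamma_add_one hd2.ne'
  have h3 : (2*π^2*κ : ℝ) ^ (-(α/2)) = ((2*κ) ^ (α/2) * π ^ α)⁻¹ := by
    rw [show (2*π^2*κ:ℝ) = (2*κ) * π^2 by ring, Real.rpow_neg (by positivity),
      Real.mul_rpow (by positivity) (by positivity)]
    congr 2
    rw [← Real.rpow_natCast π 2, ← Real.rpow_mul hπ.le]
    congr 1; ring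
  have h4 : lam ^ (-(-(α/2)) - 1) = (lam ^ (1 - α/2))⁻¹ := by
    rw [show -(-(α/2)) - 1 = -(1-α/2) by ring, Real.rpow_neg hlam.le]
  have h5 : π ^ ((d:ℝ)/2) = π ^ ((d:ℝ)/2-α) * π ^ α := by
    rw [← Real.rpow_add hπ]; congr 1; ring
  rw [h1, h2, h3, h4, h5]
  have p1 : (0:ℝ) < (2*κ) ^ (α/2) := Real.rpow_pos_of_pos (by positivity) _
  have p2 : (0:ℝ) < π ^ α := Real.rpow_pos_of_pos hπ _
  have p3 : (0:ℝ) < lam ^ (1-α/2) := Real.rpow_pos_of_pos hlam _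
  have p4 : (0:ℝ) < π ^ ((d:ℝ)/2-α) := Real.rpow_pos_of_pos hπ _
  have hdne : (d:ℝ) ≠ 0 := by positivity
  field_simp

theorem stmt_11 (d : ℕ) (hd : 1 ≤ d) (α κ lam : ℝ) (hκ : 0 < κ) (hlam : 0 < lam)
    (hα : 0 < α) (hα2 : α < 2) :
    ∀ τ : ℝ, 0 ≤ τ →
      ∫ ξ : EuclideanSpace ℝ (Fin d),
          (1 - Real.exp (-(lam + 2 * π ^ 2 * κ * ‖ξ‖ ^ 2) * τ))
            / (lam + 2 * π ^ 2 * κ * ‖ξ‖ ^ 2) * ‖ξ‖ ^ (α - (d : ℝ))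
        = (π ^ ((d : ℝ) / 2 - α) * Real.Gamma (α / 2))
            / ((2 * κ) ^ (α / 2) * Real.Gamma ((d : ℝ) / 2) * lam ^ (1 - α / 2))
            * ∫ u in Set.Ioc (0 : ℝ) (lam * τ), Real.exp (-u) * u ^ ((1 - α / 2) - 1) := by
  intro τ hτ
  haveI : Nonempty (Fin d) := ⟨⟨0, hd⟩⟩
  have hc : (0:ℝ) < 2*π^2*κ := by positivity
  have key := MeasureTheory.integral_fun_norm_addHaar
    (volume : Measure (EuclideanSpace ℝ (Fin d)))
    (fun r : ℝ => (1 - Real.exp (-(lam + 2 * π ^ 2 * κ * r ^ 2) * τ))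
      / (lam + 2 * π ^ 2 * κ * r ^ 2) * r ^ (α - (d : ℝ)))
  rw [key]
  simp only [finrank_euclideanSpace, Fintype.card_fin, nsmul_eq_mul, smul_eq_mul]
  have hV : (volume (Metric.ball (0:EuclideanSpace ℝ (Fin d)) 1)).toReal
      = Real.sqrt π ^ d / Real.Gamma ((d:ℝ)/2+1) := by
    rw [EuclideanSpace.volume_ball (Fin d) 0 1]
    simp only [ENNReal.ofReal_one, one_pow, one_mul, Fintype.card_fin]
    rw [ENNReal.toReal_ofReal]
    positivity
  have hrad : ∫ y in Set.Ioi (0:ℝ), y ^ (d - 1) *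
        ((1 - Real.exp (-(lam + 2*π^2*κ*y^2) * τ)) / (lam + 2*π^2*κ*y^2) * y ^ (α - (d:ℝ)))
      = ∫ y in Set.Ioi (0:ℝ), y ^ (α-1) *
        ((1 - Real.exp (-((lam + 2*π^2*κ*y^2) * τ))) / (lam + 2*π^2*κ*y^2)) := by
    refine setIntegral_congr_fun measurableSet_Ioi (fun y hy => ?_)
    have hy' : (0:ℝ) < y := hy
    have hpow : y ^ ((d:ℝ)-1) * y ^ (α-(d:ℝ)) = y ^ (α-1) := by
      rw [← Real.rpow_add hy']; congr 1; ring
    have hnat : (y:ℝ) ^ (d - 1) = y ^ ((d:ℝ)-1) := by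
      rw [← Real.rpow_natCast y (d-1), Nat.cast_sub hd, Nat.cast_one]
    rw [hnat, neg_mul]
    linear_combination ((1 - Real.exp (-((lam + 2*π^2*κ*y^2) * τ))) / (lam + 2*π^2*κ*y^2)) * hpow
  rw [measureReal_def, hV, hrad, aux_fubini hc hlam hα hα2 hτ, aux_subst hlam hτ]
  simp only [show (1:ℝ) - α/2 - 1 = -(α/2) by ring]
  have hconst := aux_const hd hκ hlam hα hα2
  linear_combination (∫ u in Set.Ioc (0:ℝ) (lam*τ), Real.exp (-u) * u ^ (-(α/2))) * hconst
end

section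
/- Let f: ℝ → ℝ be continuously differentiable with |f(z)| ≤ K(1 + |z|^p) and |f'(z)| ≤ K(1 + |z|^{p-1}) for some p ≥ 2. For x, y ∈ ℝ define ρ̃_f(x,y) = Cov(f(xU + yW), f(xV + yW)) where U, V, W are independent standard normal random variables. Then |∂ρ̃_f/∂x (x,y)| ≤ C(1 + |x|^{2p-1} + |y|^{2p-1}) and |∂ρ̃_f/∂y (x,y)| ≤ C(1 + |x|^{2p-1} + |y|^{2p-1}) for a constant C depending only on K and p. -/
open MeasureTheory ProbabilityTheory
open Real


lemma gauss_exp_int (c : ℝ) : Integrable (fun t => rexp (c * t)) (gaussianReal 0 1) := by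
  rw [gaussianReal_of_var_ne_zero 0 one_ne_zero]
  rw [integrable_withDensity_iff (measurable_gaussianPDF 0 1)
    (ae_of_all _ fun x => ENNReal.ofReal_lt_top)]
  have : (fun x => rexp (c * x) * (gaussianPDF 0 1 x).toReal)
      = fun x => ((√(2 * π))⁻¹ * rexp (c^2/2)) * rexp (-(2⁻¹ : ℝ) * (x - c)^2) := by
    ext x
    rw [gaussianPDF, ENNReal.toReal_ofReal (gaussianPDFReal_nonneg _ _ _), gaussianPDFReal]
    simp only [NNReal.coe_one, mul_one, sub_zero]
    rw [show -x^2/2 = (c^2/2) + (-(2⁻¹:ℝ)*(x-c)^2) + (-(c*x)) by ring]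
    rw [Real.exp_add, Real.exp_add, Real.exp_neg]
    field_simp [Real.exp_ne_zero]
  rw [this]
  exact ((integrable_exp_neg_mul_sq (by norm_num : (0:ℝ) < 2⁻¹)).comp_sub_right c).const_mul _

lemma gauss_rpow_int {q : ℝ} (hq : 0 ≤ q) :
    Integrable (fun t => (1 + |t|) ^ q) (gaussianReal 0 1) := by
  have hcont : Continuous fun t : ℝ => (1 + |t|) ^ q :=
    (continuous_const.add continuous_abs).rpow_const (fun t => Or.inr hq)
  refine Integrable.mono ((gauss_exp_int q).add (gauss_exp_int (-q)))
    hcont.aestronglyMeasurable (ae_of_all _ fun t => ?_)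
  have h1 : 0 < 1 + |t| := by positivity
  have hle : (1 + |t|) ^ q ≤ rexp (q * |t|) := by
    rw [← Real.exp_log h1, ← Real.exp_mul]
    refine Real.exp_le_exp.2 ?_
    rw [mul_comm]
    exact (mul_le_mul_of_nonneg_left
        (by simpa using Real.log_le_sub_one_of_pos h1) hq)
  simp only [Pi.add_apply, Real.norm_eq_abs]
  rw [abs_of_nonneg (Real.rpow_nonneg h1.le q),
    abs_of_nonneg (by positivity : (0:ℝ) ≤ rexp (q*t) + rexp (-q*t))]
  refine hle.trans ?_
  rcases abs_choice t with h | h <;> rw [h]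
  · exact le_add_of_nonneg_right (Real.exp_pos _).le
  · rw [mul_neg, ← neg_mul]
    exact le_add_of_nonneg_left (Real.exp_pos _).le

lemma poly_bound {K r : ℝ} (hK : 0 ≤ K) (hr : 0 ≤ r) {g : ℝ → ℝ}
    (hg : ∀ z, |g z| ≤ K * (1 + |z| ^ r)) {z R : ℝ} (hz : |z| ≤ R) :
    |g z| ≤ 2 * K * (1 + R) ^ r := by
  have hR : 0 ≤ R := le_trans (abs_nonneg z) hz
  have h2 : |z| ^ r ≤ (1 + R) ^ r :=
    Real.rpow_le_rpow (abs_nonneg z) (by linarith) hr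
  have h3 : (1:ℝ) ≤ (1 + R) ^ r := by
    calc (1:ℝ) = 1 ^ r := (Real.one_rpow r).symm
    _ ≤ (1 + R) ^ r := Real.rpow_le_rpow zero_le_one (by linarith) hr
  calc |g z| ≤ K * (1 + |z| ^ r) := hg z
  _ ≤ K * ((1 + R) ^ r + (1 + R) ^ r) := by
      apply mul_le_mul_of_nonneg_left _ hK
      linarith
  _ = 2 * K * (1 + R) ^ r := by ring

lemma one_add_le {A a b c : ℝ} (hA : 0 ≤ A) (ha : 0 ≤ a) (hb : 0 ≤ b) (hc : 0 ≤ c) :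
    1 + (1 + A) * (a + b + c) ≤ (2 + A) * ((1 + a) * (1 + b) * (1 + c)) := by
  nlinarith [mul_nonneg ha hb, mul_nonneg hb hc, mul_nonneg ha hc,
    mul_nonneg (mul_nonneg ha hb) hc, mul_nonneg hA ha, mul_nonneg hA hb, mul_nonneg hA hc,
    mul_nonneg (mul_nonneg hA ha) hb, mul_nonneg (mul_nonneg hA hb) hc,
    mul_nonneg (mul_nonneg hA ha) hc, mul_nonneg (mul_nonneg (mul_nonneg hA ha) hb) hc]

lemma one_add_le2 {A a c : ℝ} (hA : 0 ≤ A) (ha : 0 ≤ a) (hc : 0 ≤ c) :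
    1 + (1 + A) * (a + c) ≤ (2 + A) * ((1 + a) * (1 + c)) := by
  nlinarith [mul_nonneg ha hc, mul_nonneg hA ha, mul_nonneg hA hc,
    mul_nonneg (mul_nonneg hA ha) hc]

lemma abs_lin_le {A x' y' u w : ℝ} (hx' : |x'| ≤ 1 + A) (hy' : |y'| ≤ 1 + A)
    {v : ℝ} : |x' * u + y' * w| ≤ (1 + A) * (|u| + |v| + |w|) := by
  calc |x' * u + y' * w| ≤ |x'| * |u| + |y'| * |w| := by
        refine (abs_add_le _ _).trans ?_; rw [abs_mul, abs_mul]
  _ ≤ (1 + A) * (|u| + |v| + |w|) := by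
      nlinarith [abs_nonneg u, abs_nonneg v, abs_nonneg w, abs_nonneg x', abs_nonneg y',
        mul_le_mul_of_nonneg_right hx' (abs_nonneg u),
        mul_le_mul_of_nonneg_right hy' (abs_nonneg w)]

lemma abs_lin_le2 {A x' y' u w : ℝ} (hx' : |x'| ≤ 1 + A) (hy' : |y'| ≤ 1 + A) :
    |x' * u + y' * w| ≤ (1 + A) * (|u| + |w|) := by
  calc |x' * u + y' * w| ≤ |x'| * |u| + |y'| * |w| := by
        refine (abs_add_le _ _).trans ?_; rw [abs_mul, abs_mul]
  _ ≤ (1 + A) * (|u| + |w|) := by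
      nlinarith [abs_nonneg u, abs_nonneg w,
        mul_le_mul_of_nonneg_right hx' (abs_nonneg u),
        mul_le_mul_of_nonneg_right hy' (abs_nonneg w)]

lemma bound3 {f : ℝ → ℝ} {p K : ℝ} (hp : 2 ≤ p) (hK : 0 ≤ K)
    (hfb : ∀ z, |f z| ≤ K * (1 + |z| ^ p)) (hdb : ∀ z, |deriv f z| ≤ K * (1 + |z| ^ (p - 1)))
    {A x' y' c₁ c₂ u v w : ℝ} (hA : 0 ≤ A) (hx' : |x'| ≤ 1 + A) (hy' : |y'| ≤ 1 + A)
    (hc₁ : |c₁| ≤ (1+|u|)*(1+|v|)*(1+|w|)) (hc₂ : |c₂| ≤ (1+|u|)*(1+|v|)*(1+|w|)) :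
    |deriv f (x'*u + y'*w) * c₁ * f (x'*v + y'*w) + f (x'*u + y'*w) * (deriv f (x'*v + y'*w) * c₂)|
      ≤ 8*K^2 * (2+A)^(2*p-1) * ((1+|u|)^(2*p) * ((1+|v|)^(2*p) * (1+|w|)^(2*p))) := by
  set P := (1+|u|)*(1+|v|)*(1+|w|) with hPdef
  have hP : 0 < P := by positivity
  set R := (1+A)*(|u|+|v|+|w|) with hRdef
  have hR : 0 ≤ R := by positivity
  have hR1 : (0:ℝ) < 1 + R := by linarith
  have hz1 : |x'*u + y'*w| ≤ R := abs_lin_le hx' hy'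
  have hz2 : |x'*v + y'*w| ≤ R := by
    have := abs_lin_le (u := v) (w := w) (v := u) hx' hy'
    calc |x'*v + y'*w| ≤ (1+A)*(|v| + |u| + |w|) := this
    _ = R := by rw [hRdef]; ring
  have hf1 := poly_bound hK (by linarith : (0:ℝ) ≤ p) hfb hz1
  have hf2 := poly_bound hK (by linarith : (0:ℝ) ≤ p) hfb hz2
  have hd1 := poly_bound hK (by linarith : (0:ℝ) ≤ p - 1) hdb hz1
  have hd2 := poly_bound hK (by linarith : (0:ℝ) ≤ p - 1) hdb hz2
  have hRP : 1 + R ≤ (2+A)*P :=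
    one_add_le hA (abs_nonneg u) (abs_nonneg v) (abs_nonneg w)
  have e1 : (1+R)^(p-1) * (1+R)^p = (1+R)^(2*p-1) := by
    rw [← Real.rpow_add hR1]; congr 1; ring
  have e2 : P^(2*p-1) * P = P^(2*p) := by
    rw [show (2*p:ℝ) = (2*p-1)+1 by ring, Real.rpow_add_one hP.ne']
    norm_num
  have e3 : P^(2*p) = (1+|u|)^(2*p) * ((1+|v|)^(2*p) * (1+|w|)^(2*p)) := by
    rw [hPdef, Real.mul_rpow (by positivity) (by positivity),
      Real.mul_rpow (by positivity) (by positivity), mul_assoc]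
  have step1 : |deriv f (x'*u + y'*w) * c₁ * f (x'*v + y'*w)
      + f (x'*u + y'*w) * (deriv f (x'*v + y'*w) * c₂)|
      ≤ (2*K*(1+R)^(p-1)) * |c₁| * (2*K*(1+R)^p)
        + (2*K*(1+R)^p) * ((2*K*(1+R)^(p-1)) * |c₂|) := by
    refine (abs_add_le _ _).trans ?_
    rw [abs_mul, abs_mul, abs_mul, abs_mul]
    gcongr <;> positivity
  refine step1.trans ?_
  have step2 : (2*K*(1+R)^(p-1)) * |c₁| * (2*K*(1+R)^p)
        + (2*K*(1+R)^p) * ((2*K*(1+R)^(p-1)) * |c₂|)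
      = 4*K^2 * (|c₁|+|c₂|) * (1+R)^(2*p-1) := by
    rw [← e1]; ring
  rw [step2]
  have h2P : |c₁| + |c₂| ≤ 2*P := by linarith
  have hpow : (1+R)^(2*p-1) ≤ ((2+A)*P)^(2*p-1) :=
    Real.rpow_le_rpow hR1.le hRP (by linarith)
  have step3 : 4*K^2 * (|c₁|+|c₂|) * (1+R)^(2*p-1)
      ≤ 4*K^2 * (2*P) * ((2+A)*P)^(2*p-1) :=
    mul_le_mul (mul_le_mul_of_nonneg_left h2P (by positivity)) hpow
      (by positivity) (by positivity)
  refine step3.trans (le_of_eq ?_)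
  rw [Real.mul_rpow (by linarith) hP.le, ← e3, ← e2]; ring

/-- bound on `f` at a linear point, with two-variable product majorant. -/
lemma bound_single {f : ℝ → ℝ} {p K : ℝ} (hp : 2 ≤ p) (hK : 0 ≤ K)
    (hfb : ∀ z, |f z| ≤ K * (1 + |z| ^ p))
    {A x' y' u w : ℝ} (hA : 0 ≤ A) (hx' : |x'| ≤ 1 + A) (hy' : |y'| ≤ 1 + A) :
    |f (x' * u + y' * w)| ≤ 2 * K * (2 + A) ^ p * ((1 + |u|) ^ (2*p) * (1 + |w|) ^ (2*p)) := by
  set P := (1 + |u|) * (1 + |w|) with hPdef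
  have hP1 : 1 ≤ P := by nlinarith [abs_nonneg u, abs_nonneg w, mul_nonneg (abs_nonneg u) (abs_nonneg w)]
  set R := (1 + A) * (|u| + |w|) with hRdef
  have hR1 : (0:ℝ) < 1 + R := by positivity
  have hz := abs_lin_le2 (A := A) hx' hy' (u := u) (w := w)
  have hf1 := poly_bound hK (by linarith : (0:ℝ) ≤ p) hfb hz
  have hRP : 1 + R ≤ (2 + A) * P := one_add_le2 hA (abs_nonneg u) (abs_nonneg w)
  have h1 : (1 + R) ^ p ≤ ((2 + A) * P) ^ p := Real.rpow_le_rpow hR1.le hRP (by linarith)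
  have h2 : P ^ p ≤ P ^ (2*p) := Real.rpow_le_rpow_of_exponent_le hP1 (by linarith)
  have e3 : P ^ (2*p) = (1 + |u|) ^ (2*p) * (1 + |w|) ^ (2*p) :=
    Real.mul_rpow (by positivity) (by positivity)
  calc |f (x' * u + y' * w)| ≤ 2 * K * (1 + R) ^ p := hf1
  _ ≤ 2 * K * ((2 + A) ^ p * P ^ p) := by
      rw [← Real.mul_rpow (by linarith) (by linarith)]
      exact mul_le_mul_of_nonneg_left h1 (by positivity)
  _ ≤ 2 * K * ((2 + A) ^ p * P ^ (2*p)) := by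
      have := mul_le_mul_of_nonneg_left h2 (by positivity : (0:ℝ) ≤ (2+A)^p)
      exact mul_le_mul_of_nonneg_left this (by positivity)
  _ = 2 * K * (2 + A) ^ p * ((1 + |u|) ^ (2*p) * (1 + |w|) ^ (2*p)) := by rw [e3]; ring

/-- bound on `deriv f` times coefficient, two-variable majorant. -/
lemma bound_dsingle {f : ℝ → ℝ} {p K : ℝ} (hp : 2 ≤ p) (hK : 0 ≤ K)
    (hdb : ∀ z, |deriv f z| ≤ K * (1 + |z| ^ (p - 1)))
    {A x' y' u w c : ℝ} (hA : 0 ≤ A) (hx' : |x'| ≤ 1 + A) (hy' : |y'| ≤ 1 + A)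
    (hc : |c| ≤ (1 + |u|) * (1 + |w|)) :
    |deriv f (x' * u + y' * w) * c|
      ≤ 2 * K * (2 + A) ^ (p-1) * ((1 + |u|) ^ (2*p) * (1 + |w|) ^ (2*p)) := by
  set P := (1 + |u|) * (1 + |w|) with hPdef
  have hP1 : 1 ≤ P := by nlinarith [abs_nonneg u, abs_nonneg w, mul_nonneg (abs_nonneg u) (abs_nonneg w)]
  set R := (1 + A) * (|u| + |w|) with hRdef
  have hR1 : (0:ℝ) < 1 + R := by positivity
  have hz := abs_lin_le2 (A := A) hx' hy' (u := u) (w := w)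
  have hd1 := poly_bound hK (by linarith : (0:ℝ) ≤ p - 1) hdb hz
  have hRP : 1 + R ≤ (2 + A) * P := one_add_le2 hA (abs_nonneg u) (abs_nonneg w)
  have h1 : (1 + R) ^ (p-1) ≤ (2 + A) ^ (p-1) * P ^ (p-1) := by
    rw [← Real.mul_rpow (by linarith) (by linarith)]
    exact Real.rpow_le_rpow hR1.le hRP (by linarith)
  have e1 : P ^ (p-1) * P = P ^ p := by
    rw [show (p:ℝ) = (p-1)+1 by ring, Real.rpow_add_one (by positivity : P ≠ 0)]
    norm_num
  have h2 : P ^ p ≤ P ^ (2*p) := Real.rpow_le_rpow_of_exponent_le hP1 (by linarith)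
  have e3 : P ^ (2*p) = (1 + |u|) ^ (2*p) * (1 + |w|) ^ (2*p) :=
    Real.mul_rpow (by positivity) (by positivity)
  calc |deriv f (x' * u + y' * w) * c| = |deriv f (x' * u + y' * w)| * |c| := abs_mul _ _
  _ ≤ (2 * K * (1 + R) ^ (p-1)) * P :=
      mul_le_mul hd1 hc (abs_nonneg c) (by positivity)
  _ ≤ (2 * K * ((2 + A) ^ (p-1) * P ^ (p-1))) * P := by
      have := mul_le_mul_of_nonneg_left h1 (by positivity : (0:ℝ) ≤ 2*K)
      exact mul_le_mul_of_nonneg_right this (by positivity)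
  _ = 2 * K * (2 + A) ^ (p-1) * (P ^ (p-1) * P) := by ring
  _ = 2 * K * (2 + A) ^ (p-1) * P ^ p := by rw [e1]
  _ ≤ 2 * K * (2 + A) ^ (p-1) * P ^ (2*p) :=
      mul_le_mul_of_nonneg_left h2 (by positivity)
  _ = 2 * K * (2 + A) ^ (p-1) * ((1 + |u|) ^ (2*p) * (1 + |w|) ^ (2*p)) := by rw [e3]

lemma bound_pair {f : ℝ → ℝ} {p K : ℝ} (hp : 2 ≤ p) (hK : 0 ≤ K)
    (hfb : ∀ z, |f z| ≤ K * (1 + |z| ^ p))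
    {A x' y' u v w : ℝ} (hA : 0 ≤ A) (hx' : |x'| ≤ 1 + A) (hy' : |y'| ≤ 1 + A) :
    |f (x' * u + y' * w) * f (x' * v + y' * w)|
      ≤ 4 * K^2 * (2 + A) ^ (2*p) *
        ((1 + |u|) ^ (2*p) * ((1 + |v|) ^ (2*p) * (1 + |w|) ^ (2*p))) := by
  set P := (1+|u|)*(1+|v|)*(1+|w|) with hPdef
  have hP : 0 < P := by positivity
  set R := (1+A)*(|u|+|v|+|w|) with hRdef
  have hR1 : (0:ℝ) < 1 + R := by positivity
  have hz1 : |x'*u + y'*w| ≤ R := abs_lin_le hx' hy'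
  have hz2 : |x'*v + y'*w| ≤ R := by
    have := abs_lin_le (u := v) (w := w) (v := u) hx' hy'
    calc |x'*v + y'*w| ≤ (1+A)*(|v| + |u| + |w|) := this
    _ = R := by rw [hRdef]; ring
  have hf1 := poly_bound hK (by linarith : (0:ℝ) ≤ p) hfb hz1
  have hf2 := poly_bound hK (by linarith : (0:ℝ) ≤ p) hfb hz2
  have hRP : 1 + R ≤ (2+A)*P :=
    one_add_le hA (abs_nonneg u) (abs_nonneg v) (abs_nonneg w)
  have e1 : (1+R)^p * (1+R)^p = (1+R)^(2*p) := by
    rw [← Real.rpow_add hR1]; congr 1; ring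
  have e3 : P^(2*p) = (1+|u|)^(2*p) * ((1+|v|)^(2*p) * (1+|w|)^(2*p)) := by
    rw [hPdef, Real.mul_rpow (by positivity) (by positivity),
      Real.mul_rpow (by positivity) (by positivity), mul_assoc]
  have step1 : |f (x'*u + y'*w) * f (x'*v + y'*w)|
      ≤ (2*K*(1+R)^p) * (2*K*(1+R)^p) := by
    rw [abs_mul]
    exact mul_le_mul hf1 hf2 (abs_nonneg _) (by positivity)
  refine step1.trans ?_
  have step2 : (2*K*(1+R)^p) * (2*K*(1+R)^p) = 4*K^2 * (1+R)^(2*p) := by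
    rw [← e1]; ring
  rw [step2]
  have hpow : (1+R)^(2*p) ≤ ((2+A)*P)^(2*p) :=
    Real.rpow_le_rpow hR1.le hRP (by linarith)
  calc 4*K^2 * (1+R)^(2*p) ≤ 4*K^2 * ((2+A)*P)^(2*p) :=
      mul_le_mul_of_nonneg_left hpow (by positivity)
  _ = 4 * K^2 * (2 + A) ^ (2*p) * ((1 + |u|) ^ (2*p) * ((1 + |v|) ^ (2*p) * (1 + |w|) ^ (2*p))) := by
      rw [Real.mul_rpow (by linarith) hP.le, ← e3]; ring

lemma T_bound {x y p : ℝ} (hp : 2 ≤ p) :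
    (2 + (|x| + |y|)) ^ (2*p-1) ≤ 4 ^ (2*p-1) * (1 + |x| ^ (2*p-1) + |y| ^ (2*p-1)) := by
  set m := max 1 (max |x| |y|) with hm
  have hm1 : (1:ℝ) ≤ m := le_max_left _ _
  have hmx : |x| ≤ m := le_trans (le_max_left _ _) (le_max_right _ _)
  have hmy : |y| ≤ m := le_trans (le_max_right _ _) (le_max_right _ _)
  have h4 : 2 + (|x| + |y|) ≤ 4 * m := by linarith
  have step1 : (2 + (|x| + |y|)) ^ (2*p-1) ≤ (4 * m) ^ (2*p-1) :=
    Real.rpow_le_rpow (by positivity) h4 (by linarith)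
  refine step1.trans ?_
  rw [Real.mul_rpow (by norm_num) (by linarith)]
  refine mul_le_mul_of_nonneg_left ?_ (by positivity)
  have hmr : m ^ (2*p-1) ≤ 1 + |x| ^ (2*p-1) + |y| ^ (2*p-1) := by
    have hx0 : (0:ℝ) ≤ |x| ^ (2*p-1) := Real.rpow_nonneg (abs_nonneg x) _
    have hy0 : (0:ℝ) ≤ |y| ^ (2*p-1) := Real.rpow_nonneg (abs_nonneg y) _
    rcases max_cases (1:ℝ) (max |x| |y|) with ⟨h, _⟩ | ⟨h, _⟩
    · rw [hm, h, Real.one_rpow]; linarith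
    · rw [hm, h]
      rcases max_cases |x| |y| with ⟨h2, _⟩ | ⟨h2, _⟩ <;> rw [h2] <;> linarith
  exact hmr

/-- `Cov(f(xU + yW), f(xV + yW))` for independent standard normal `U, V, W`. -/
noncomputable def rhoTilde (f : ℝ → ℝ) (x y : ℝ) : ℝ :=
  (∫ q : ℝ × ℝ × ℝ, f (x * q.1 + y * q.2.2) * f (x * q.2.1 + y * q.2.2)
      ∂((gaussianReal 0 1).prod ((gaussianReal 0 1).prod (gaussianReal 0 1)))) -
  (∫ q : ℝ × ℝ, f (x * q.1 + y * q.2) ∂((gaussianReal 0 1).prod (gaussianReal 0 1))) *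
  (∫ q : ℝ × ℝ, f (x * q.1 + y * q.2) ∂((gaussianReal 0 1).prod (gaussianReal 0 1)))

lemma abs_le_prod3_1 {u v w : ℝ} : |u| ≤ (1+|u|)*(1+|v|)*(1+|w|) := by
  nlinarith [abs_nonneg u, abs_nonneg v, abs_nonneg w, mul_nonneg (abs_nonneg u) (abs_nonneg v),
    mul_nonneg (abs_nonneg v) (abs_nonneg w), mul_nonneg (abs_nonneg u) (abs_nonneg w),
    mul_nonneg (mul_nonneg (abs_nonneg u) (abs_nonneg v)) (abs_nonneg w)]

lemma abs_le_prod3_2 {u v w : ℝ} : |v| ≤ (1+|u|)*(1+|v|)*(1+|w|) := by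
  nlinarith [abs_nonneg u, abs_nonneg v, abs_nonneg w, mul_nonneg (abs_nonneg u) (abs_nonneg v),
    mul_nonneg (abs_nonneg v) (abs_nonneg w), mul_nonneg (abs_nonneg u) (abs_nonneg w),
    mul_nonneg (mul_nonneg (abs_nonneg u) (abs_nonneg v)) (abs_nonneg w)]

lemma abs_le_prod3_3 {u v w : ℝ} : |w| ≤ (1+|u|)*(1+|v|)*(1+|w|) := by
  nlinarith [abs_nonneg u, abs_nonneg v, abs_nonneg w, mul_nonneg (abs_nonneg u) (abs_nonneg v),
    mul_nonneg (abs_nonneg v) (abs_nonneg w), mul_nonneg (abs_nonneg u) (abs_nonneg w),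
    mul_nonneg (mul_nonneg (abs_nonneg u) (abs_nonneg v)) (abs_nonneg w)]

lemma abs_le_prod2_1 {u w : ℝ} : |u| ≤ (1+|u|)*(1+|w|) := by
  nlinarith [abs_nonneg u, abs_nonneg w, mul_nonneg (abs_nonneg u) (abs_nonneg w)]

lemma abs_le_prod2_2 {u w : ℝ} : |w| ≤ (1+|u|)*(1+|w|) := by
  nlinarith [abs_nonneg u, abs_nonneg w, mul_nonneg (abs_nonneg u) (abs_nonneg w)]

lemma ball_abs {c t : ℝ} (ht : t ∈ Metric.ball c 1) : |t| ≤ 1 + |c| := by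
  have h1 : |t - c| < 1 := by rwa [Metric.mem_ball, Real.dist_eq] at ht
  have := abs_sub_abs_le_abs_sub t c
  linarith

lemma final_arith {K M T I' J J' X Y p : ℝ} (hp : 2 ≤ p) (hK : 0 ≤ K) (hM : 1 ≤ M)
    (hT : 0 < T) (hI : |I'| ≤ 8*K^2*T^(2*p-1)*(M*(M*M))) (hJ : |J| ≤ 2*K*T^p*(M*M))
    (hJ' : |J'| ≤ 2*K*T^(p-1)*(M*M)) (hX : 0 ≤ X) (hY : 0 ≤ Y)
    (hTb : T^(2*p-1) ≤ 4^(2*p-1) * (1 + X + Y)) :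
    |I' - (J'*J + J*J')| ≤ 8*K^2*(M^3+M^4)*4^(2*p-1) * (1 + X + Y) := by
  have e : T^p * T^(p-1) = T^(2*p-1) := by rw [← Real.rpow_add hT]; congr 1; ring
  have h1 : |I' - (J'*J + J*J')| ≤ |I'| + (|J| * |J'| + |J| * |J'|) := by
    rw [sub_eq_add_neg]
    refine (abs_add_le _ _).trans ?_
    rw [abs_neg]
    have h2 : |J'*J + J*J'| ≤ |J| * |J'| + |J| * |J'| := by
      refine (abs_add_le _ _).trans ?_
      rw [abs_mul, abs_mul, mul_comm |J'| |J|]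
    linarith
  have h2 : |J| * |J'| ≤ 4*K^2*T^(2*p-1)*(M*M*(M*M)) := by
    calc |J| * |J'| ≤ (2*K*T^p*(M*M)) * (2*K*T^(p-1)*(M*M)) :=
        mul_le_mul hJ hJ' (abs_nonneg _) (by positivity)
    _ = 4*K^2*(T^p*T^(p-1))*(M*M*(M*M)) := by ring
    _ = 4*K^2*T^(2*p-1)*(M*M*(M*M)) := by rw [e]
  calc |I' - (J'*J + J*J')| ≤ |I'| + (|J| * |J'| + |J| * |J'|) := h1
  _ ≤ 8*K^2*T^(2*p-1)*(M*(M*M))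
      + (4*K^2*T^(2*p-1)*(M*M*(M*M)) + 4*K^2*T^(2*p-1)*(M*M*(M*M))) := by linarith
  _ = 8*K^2*(M^3+M^4)*T^(2*p-1) := by ring
  _ ≤ 8*K^2*(M^3+M^4)*(4^(2*p-1)*(1+X+Y)) :=
      mul_le_mul_of_nonneg_left hTb (by positivity)
  _ = 8*K^2*(M^3+M^4)*4^(2*p-1) * (1 + X + Y) := by ring

theorem stmt_13 (p K : ℝ) (hp : 2 ≤ p) :
    ∃ C : ℝ, ∀ f : ℝ → ℝ, ContDiff ℝ 1 f →
      (∀ z, |f z| ≤ K * (1 + |z| ^ p)) →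
      (∀ z, |deriv f z| ≤ K * (1 + |z| ^ (p - 1))) →
      ∀ x y : ℝ,
        |deriv (fun x' => rhoTilde f x' y) x| ≤ C * (1 + |x| ^ (2 * p - 1) + |y| ^ (2 * p - 1)) ∧
        |deriv (fun y' => rhoTilde f x y') y| ≤ C * (1 + |x| ^ (2 * p - 1) + |y| ^ (2 * p - 1)) := by
  have hq0 : (0:ℝ) ≤ 2*p := by linarith
  set γ := gaussianReal 0 1 with hγ
  set M := ∫ t, (1 + |t|) ^ (2*p) ∂γ with hMdef
  refine ⟨8*K^2*(M^3+M^4) * 4^(2*p-1), ?_⟩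
  intro f hf hfb hdb x y
  have hK : 0 ≤ K := by
    have h0 := hfb 0
    rw [abs_zero, Real.zero_rpow (by linarith : p ≠ 0)] at h0
    have := abs_nonneg (f 0)
    linarith
  have hfc : Continuous f := hf.continuous
  have hdc : Continuous (deriv f) := hf.continuous_deriv le_rfl
  have hfd : ∀ z, HasDerivAt f (deriv f z) z :=
    fun z => ((hf.differentiable one_ne_zero) z).hasDerivAt
  have hGint : Integrable (fun t => (1+|t|)^(2*p)) γ := gauss_rpow_int hq0
  have hM1 : (1:ℝ) ≤ M := by
    rw [hMdef]
    calc (1:ℝ) = ∫ _t : ℝ, (1:ℝ) ∂γ := by simp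
    _ ≤ ∫ t, (1+|t|)^(2*p) ∂γ := by
        refine integral_mono (integrable_const 1) hGint (fun t => ?_)
        calc (1:ℝ) = 1 ^ (2*p) := (Real.one_rpow _).symm
        _ ≤ (1+|t|)^(2*p) := Real.rpow_le_rpow zero_le_one (by simp [abs_nonneg]) hq0
  set A := |x| + |y| with hAdef
  have hA0 : (0:ℝ) ≤ A := by positivity
  have hxA : |x| ≤ 1 + A := by rw [hAdef]; have := abs_nonneg y; linarith
  have hyA : |y| ≤ 1 + A := by rw [hAdef]; have := abs_nonneg x; linarith
  have hT0 : (0:ℝ) < 2 + A := by linarith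
  have hxA1 : 1 + |x| ≤ 1 + A := by rw [hAdef]; linarith [abs_nonneg y]
  have hyA1 : 1 + |y| ≤ 1 + A := by rw [hAdef]; linarith [abs_nonneg x]
  -- continuity helpers
  have c13 : ∀ a b : ℝ, Continuous fun q : ℝ×ℝ×ℝ => a * q.1 + b * q.2.2 := fun a b =>
    (continuous_const.mul continuous_fst).add
      (continuous_const.mul (continuous_snd.comp continuous_snd))
  have c23 : ∀ a b : ℝ, Continuous fun q : ℝ×ℝ×ℝ => a * q.2.1 + b * q.2.2 := fun a b =>
    (continuous_const.mul (continuous_fst.comp continuous_snd)).add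
      (continuous_const.mul (continuous_snd.comp continuous_snd))
  have c12 : ∀ a b : ℝ, Continuous fun r : ℝ×ℝ => a * r.1 + b * r.2 := fun a b =>
    (continuous_const.mul continuous_fst).add (continuous_const.mul continuous_snd)
  have intG3 : Integrable
      (fun q : ℝ×ℝ×ℝ => (1+|q.1|)^(2*p) * ((1+|q.2.1|)^(2*p) * (1+|q.2.2|)^(2*p)))
      (γ.prod (γ.prod γ)) := hGint.mul_prod (hGint.mul_prod hGint)
  have iG3 : ∫ q : ℝ×ℝ×ℝ, (1+|q.1|)^(2*p) * ((1+|q.2.1|)^(2*p) * (1+|q.2.2|)^(2*p))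
      ∂(γ.prod (γ.prod γ)) = M * (M*M) := by
    rw [integral_prod_mul (f := fun t : ℝ => (1+|t|)^(2*p))
      (g := fun r : ℝ×ℝ => (1+|r.1|)^(2*p) * (1+|r.2|)^(2*p)),
      integral_prod_mul (f := fun t : ℝ => (1+|t|)^(2*p)) (g := fun t : ℝ => (1+|t|)^(2*p))]
  have intG2 : Integrable (fun r : ℝ×ℝ => (1+|r.1|)^(2*p) * (1+|r.2|)^(2*p)) (γ.prod γ) :=
    hGint.mul_prod hGint
  have iG2 : ∫ r : ℝ×ℝ, (1+|r.1|)^(2*p) * (1+|r.2|)^(2*p) ∂(γ.prod γ) = M * M :=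
    integral_prod_mul (f := fun t : ℝ => (1+|t|)^(2*p)) (g := fun t : ℝ => (1+|t|)^(2*p))
  constructor
  -- ==================== x-direction ====================
  · obtain ⟨hF'int3, hI⟩ := hasDerivAt_integral_of_dominated_loc_of_deriv_le
      (μ := γ.prod (γ.prod γ)) (x₀ := x)
      (F := fun x' (q : ℝ×ℝ×ℝ) => f (x' * q.1 + y * q.2.2) * f (x' * q.2.1 + y * q.2.2))
      (F' := fun x' q => deriv f (x' * q.1 + y * q.2.2) * q.1 * f (x' * q.2.1 + y * q.2.2)
        + f (x' * q.1 + y * q.2.2) * (deriv f (x' * q.2.1 + y * q.2.2) * q.2.1))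
      (bound := fun q => 8*K^2*(2+A)^(2*p-1)
        * ((1+|q.1|)^(2*p) * ((1+|q.2.1|)^(2*p) * (1+|q.2.2|)^(2*p))))
      (Metric.ball_mem_nhds _ one_pos)
      (Filter.Eventually.of_forall fun x' =>
        ((hfc.comp (c13 x' y)).mul (hfc.comp (c23 x' y))).aestronglyMeasurable)
      (Integrable.mono' (intG3.const_mul (4*K^2*(2+A)^(2*p)))
        ((hfc.comp (c13 x y)).mul (hfc.comp (c23 x y))).aestronglyMeasurable
        (ae_of_all _ fun q => by
          rw [Real.norm_eq_abs]
          exact bound_pair hp hK hfb hA0 hxA hyA))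
      ((((hdc.comp (c13 x y)).mul continuous_fst).mul (hfc.comp (c23 x y))).add
        ((hfc.comp (c13 x y)).mul ((hdc.comp (c23 x y)).mul
          (continuous_fst.comp continuous_snd)))).aestronglyMeasurable
      (ae_of_all _ fun q x' hx' => by
        rw [Real.norm_eq_abs]
        exact bound3 hp hK hfb hdb hA0 ((ball_abs hx').trans hxA1) hyA
          abs_le_prod3_1 abs_le_prod3_2)
      (intG3.const_mul _)
      (ae_of_all _ fun q x' _ => by
        have h1 : HasDerivAt (fun s => s * q.1 + y * q.2.2) q.1 x' :=
          (hasDerivAt_mul_const q.1).add_const _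
        have h2 : HasDerivAt (fun s => s * q.2.1 + y * q.2.2) q.2.1 x' :=
          (hasDerivAt_mul_const q.2.1).add_const _
        exact ((hfd _).comp x' h1).mul ((hfd _).comp x' h2))
    obtain ⟨hF'int2, hJd⟩ := hasDerivAt_integral_of_dominated_loc_of_deriv_le
      (μ := γ.prod γ) (x₀ := x)
      (F := fun x' (r : ℝ×ℝ) => f (x' * r.1 + y * r.2))
      (F' := fun x' r => deriv f (x' * r.1 + y * r.2) * r.1)
      (bound := fun r => 2*K*(2+A)^(p-1) * ((1+|r.1|)^(2*p) * (1+|r.2|)^(2*p)))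
      (Metric.ball_mem_nhds _ one_pos)
      (Filter.Eventually.of_forall fun x' => (hfc.comp (c12 x' y)).aestronglyMeasurable)
      (Integrable.mono' (intG2.const_mul (2*K*(2+A)^p))
        (hfc.comp (c12 x y)).aestronglyMeasurable
        (ae_of_all _ fun r => by
          rw [Real.norm_eq_abs]
          exact bound_single hp hK hfb hA0 hxA hyA))
      (((hdc.comp (c12 x y)).mul continuous_fst).aestronglyMeasurable)
      (ae_of_all _ fun r x' hx' => by
        rw [Real.norm_eq_abs]
        exact bound_dsingle hp hK hdb hA0 ((ball_abs hx').trans hxA1) hyA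
          abs_le_prod2_1)
      (intG2.const_mul _)
      (ae_of_all _ fun r x' _ => by
        have h1 : HasDerivAt (fun s => s * r.1 + y * r.2) r.1 x' :=
          (hasDerivAt_mul_const r.1).add_const _
        exact (hfd _).comp x' h1)
    -- derivative of rhoTilde
    have Hd : HasDerivAt (fun x' => rhoTilde f x' y)
        ((∫ q : ℝ×ℝ×ℝ, deriv f (x * q.1 + y * q.2.2) * q.1 * f (x * q.2.1 + y * q.2.2)
          + f (x * q.1 + y * q.2.2) * (deriv f (x * q.2.1 + y * q.2.2) * q.2.1)
          ∂(γ.prod (γ.prod γ)))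
        - ((∫ r : ℝ×ℝ, deriv f (x * r.1 + y * r.2) * r.1 ∂(γ.prod γ))
            * (∫ r : ℝ×ℝ, f (x * r.1 + y * r.2) ∂(γ.prod γ))
          + (∫ r : ℝ×ℝ, f (x * r.1 + y * r.2) ∂(γ.prod γ))
            * (∫ r : ℝ×ℝ, deriv f (x * r.1 + y * r.2) * r.1 ∂(γ.prod γ)))) x :=
      hI.sub (hJd.mul hJd)
    rw [Hd.deriv]
    -- bounds on the three integrals
    have hIb : |∫ q : ℝ×ℝ×ℝ, deriv f (x * q.1 + y * q.2.2) * q.1 * f (x * q.2.1 + y * q.2.2)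
          + f (x * q.1 + y * q.2.2) * (deriv f (x * q.2.1 + y * q.2.2) * q.2.1)
          ∂(γ.prod (γ.prod γ))| ≤ 8*K^2*(2+A)^(2*p-1)*(M*(M*M)) := by
      have := norm_integral_le_of_norm_le (intG3.const_mul (8*K^2*(2+A)^(2*p-1)))
        (ae_of_all _ fun q : ℝ×ℝ×ℝ => by
          rw [Real.norm_eq_abs]
          exact bound3 hp hK hfb hdb hA0 hxA hyA abs_le_prod3_1 abs_le_prod3_2)
      rw [Real.norm_eq_abs] at this
      refine this.trans ?_
      rw [integral_const_mul, iG3]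
    have hJb : |∫ r : ℝ×ℝ, f (x * r.1 + y * r.2) ∂(γ.prod γ)| ≤ 2*K*(2+A)^p*(M*M) := by
      have := norm_integral_le_of_norm_le (intG2.const_mul (2*K*(2+A)^p))
        (ae_of_all _ fun r : ℝ×ℝ => by
          rw [Real.norm_eq_abs]
          exact bound_single hp hK hfb hA0 hxA hyA)
      rw [Real.norm_eq_abs] at this
      refine this.trans ?_
      rw [integral_const_mul, iG2]
    have hJ'b : |∫ r : ℝ×ℝ, deriv f (x * r.1 + y * r.2) * r.1 ∂(γ.prod γ)|
        ≤ 2*K*(2+A)^(p-1)*(M*M) := by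
      have := norm_integral_le_of_norm_le (intG2.const_mul (2*K*(2+A)^(p-1)))
        (ae_of_all _ fun r : ℝ×ℝ => by
          rw [Real.norm_eq_abs]
          exact bound_dsingle hp hK hdb hA0 hxA hyA abs_le_prod2_1)
      rw [Real.norm_eq_abs] at this
      refine this.trans ?_
      rw [integral_const_mul, iG2]
    exact final_arith hp hK hM1 hT0 hIb hJb hJ'b
      (Real.rpow_nonneg (abs_nonneg x) _) (Real.rpow_nonneg (abs_nonneg y) _)
      (T_bound hp)
  -- ==================== y-direction ====================
  · obtain ⟨hF'int3, hI⟩ := hasDerivAt_integral_of_dominated_loc_of_deriv_le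
      (μ := γ.prod (γ.prod γ)) (x₀ := y)
      (F := fun y' (q : ℝ×ℝ×ℝ) => f (x * q.1 + y' * q.2.2) * f (x * q.2.1 + y' * q.2.2))
      (F' := fun y' q => deriv f (x * q.1 + y' * q.2.2) * q.2.2 * f (x * q.2.1 + y' * q.2.2)
        + f (x * q.1 + y' * q.2.2) * (deriv f (x * q.2.1 + y' * q.2.2) * q.2.2))
      (bound := fun q => 8*K^2*(2+A)^(2*p-1)
        * ((1+|q.1|)^(2*p) * ((1+|q.2.1|)^(2*p) * (1+|q.2.2|)^(2*p))))
      (Metric.ball_mem_nhds _ one_pos)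
      (Filter.Eventually.of_forall fun y' =>
        ((hfc.comp (c13 x y')).mul (hfc.comp (c23 x y'))).aestronglyMeasurable)
      (Integrable.mono' (intG3.const_mul (4*K^2*(2+A)^(2*p)))
        ((hfc.comp (c13 x y)).mul (hfc.comp (c23 x y))).aestronglyMeasurable
        (ae_of_all _ fun q => by
          rw [Real.norm_eq_abs]
          exact bound_pair hp hK hfb hA0 hxA hyA))
      ((((hdc.comp (c13 x y)).mul (continuous_snd.comp continuous_snd)).mul
          (hfc.comp (c23 x y))).add
        ((hfc.comp (c13 x y)).mul ((hdc.comp (c23 x y)).mul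
          (continuous_snd.comp continuous_snd)))).aestronglyMeasurable
      (ae_of_all _ fun q y' hy' => by
        rw [Real.norm_eq_abs]
        exact bound3 hp hK hfb hdb hA0 hxA ((ball_abs hy').trans hyA1)
          abs_le_prod3_3 abs_le_prod3_3)
      (intG3.const_mul _)
      (ae_of_all _ fun q y' _ => by
        have h1 : HasDerivAt (fun s => x * q.1 + s * q.2.2) q.2.2 y' :=
          (hasDerivAt_mul_const q.2.2).const_add _
        have h2 : HasDerivAt (fun s => x * q.2.1 + s * q.2.2) q.2.2 y' :=
          (hasDerivAt_mul_const q.2.2).const_add _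
        exact ((hfd _).comp y' h1).mul ((hfd _).comp y' h2))
    obtain ⟨hF'int2, hJd⟩ := hasDerivAt_integral_of_dominated_loc_of_deriv_le
      (μ := γ.prod γ) (x₀ := y)
      (F := fun y' (r : ℝ×ℝ) => f (x * r.1 + y' * r.2))
      (F' := fun y' r => deriv f (x * r.1 + y' * r.2) * r.2)
      (bound := fun r => 2*K*(2+A)^(p-1) * ((1+|r.1|)^(2*p) * (1+|r.2|)^(2*p)))
      (Metric.ball_mem_nhds _ one_pos)
      (Filter.Eventually.of_forall fun y' => (hfc.comp (c12 x y')).aestronglyMeasurable)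
      (Integrable.mono' (intG2.const_mul (2*K*(2+A)^p))
        (hfc.comp (c12 x y)).aestronglyMeasurable
        (ae_of_all _ fun r => by
          rw [Real.norm_eq_abs]
          exact bound_single hp hK hfb hA0 hxA hyA))
      (((hdc.comp (c12 x y)).mul continuous_snd).aestronglyMeasurable)
      (ae_of_all _ fun r y' hy' => by
        rw [Real.norm_eq_abs]
        exact bound_dsingle hp hK hdb hA0 hxA ((ball_abs hy').trans hyA1)
          abs_le_prod2_2)
      (intG2.const_mul _)
      (ae_of_all _ fun r y' _ => by
        have h1 : HasDerivAt (fun s => x * r.1 + s * r.2) r.2 y' :=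
          (hasDerivAt_mul_const r.2).const_add _
        exact (hfd _).comp y' h1)
    have Hd : HasDerivAt (fun y' => rhoTilde f x y')
        ((∫ q : ℝ×ℝ×ℝ, deriv f (x * q.1 + y * q.2.2) * q.2.2 * f (x * q.2.1 + y * q.2.2)
          + f (x * q.1 + y * q.2.2) * (deriv f (x * q.2.1 + y * q.2.2) * q.2.2)
          ∂(γ.prod (γ.prod γ)))
        - ((∫ r : ℝ×ℝ, deriv f (x * r.1 + y * r.2) * r.2 ∂(γ.prod γ))
            * (∫ r : ℝ×ℝ, f (x * r.1 + y * r.2) ∂(γ.prod γ))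
          + (∫ r : ℝ×ℝ, f (x * r.1 + y * r.2) ∂(γ.prod γ))
            * (∫ r : ℝ×ℝ, deriv f (x * r.1 + y * r.2) * r.2 ∂(γ.prod γ)))) y :=
      hI.sub (hJd.mul hJd)
    rw [Hd.deriv]
    have hIb : |∫ q : ℝ×ℝ×ℝ, deriv f (x * q.1 + y * q.2.2) * q.2.2 * f (x * q.2.1 + y * q.2.2)
          + f (x * q.1 + y * q.2.2) * (deriv f (x * q.2.1 + y * q.2.2) * q.2.2)
          ∂(γ.prod (γ.prod γ))| ≤ 8*K^2*(2+A)^(2*p-1)*(M*(M*M)) := by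
      have := norm_integral_le_of_norm_le (intG3.const_mul (8*K^2*(2+A)^(2*p-1)))
        (ae_of_all _ fun q : ℝ×ℝ×ℝ => by
          rw [Real.norm_eq_abs]
          exact bound3 hp hK hfb hdb hA0 hxA hyA abs_le_prod3_3 abs_le_prod3_3)
      rw [Real.norm_eq_abs] at this
      refine this.trans ?_
      rw [integral_const_mul, iG3]
    have hJb : |∫ r : ℝ×ℝ, f (x * r.1 + y * r.2) ∂(γ.prod γ)| ≤ 2*K*(2+A)^p*(M*M) := by
      have := norm_integral_le_of_norm_le (intG2.const_mul (2*K*(2+A)^p))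
        (ae_of_all _ fun r : ℝ×ℝ => by
          rw [Real.norm_eq_abs]
          exact bound_single hp hK hfb hA0 hxA hyA)
      rw [Real.norm_eq_abs] at this
      refine this.trans ?_
      rw [integral_const_mul, iG2]
    have hJ'b : |∫ r : ℝ×ℝ, deriv f (x * r.1 + y * r.2) * r.2 ∂(γ.prod γ)|
        ≤ 2*K*(2+A)^(p-1)*(M*M) := by
      have := norm_integral_le_of_norm_le (intG2.const_mul (2*K*(2+A)^(p-1)))
        (ae_of_all _ fun r : ℝ×ℝ => by
          rw [Real.norm_eq_abs]
          exact bound_dsingle hp hK hdb hA0 hxA hyA abs_le_prod2_2)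
      rw [Real.norm_eq_abs] at this
      refine this.trans ?_
      rw [integral_const_mul, iG2]
    exact final_arith hp hK hM1 hT0 hIb hJb hJ'b
      (Real.rpow_nonneg (abs_nonneg x) _) (Real.rpow_nonneg (abs_nonneg y) _)
      (T_bound hp)
end

section
/- Let f: ℝ → ℝ be continuously differentiable with |f(z)| ≤ K(1+|z|^p) and |f'(z)| ≤ K(1+|z|^{p-1}) for some p ≥ 2. For v ≥ 0 and c ∈ [0,v] define ρ_f(v,c) = Cov(f(X), f(Y)), where (X,Y) is centered bivariate Gaussian with Var(X) = Var(Y) = v and Cov(X,Y) = c. Then for all v, v' ≥ 0, c ∈ [0,v], c' ∈ [0,v'], |ρ_f(v,c) − ρ_f(v',c')| ≤ C (1 + v^{p-1/2} + v'^{p-1/2}) (√|v−v'| + √|c−c'|), with C depending only on K and p. -/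
open MeasureTheory ProbabilityTheory

/-- `Cov(f(X), f(Y))` for a centered bivariate Gaussian pair with common variance `v`
and covariance `c ∈ [0, v]`, via the representation `X = √(v-c)·U + √c·W`,
`Y = √(v-c)·V + √c·W` with `U, V, W` independent standard normals. -/
noncomputable def rhoCov (f : ℝ → ℝ) (v c : ℝ) : ℝ :=
  rhoTilde f (Real.sqrt (v - c)) (Real.sqrt c)

open Real

lemma gauss_poly_integrable (n : ℕ) :
    Integrable (fun t : ℝ => (1 + |t|) ^ n) (gaussianReal 0 1) := by
  have h1 : ∀ k : ℕ, Integrable (fun x : ℝ => |x| ^ k * Real.exp (-(2⁻¹ : ℝ) * x ^ 2)) := by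
    intro k
    have h := integrable_rpow_mul_exp_neg_mul_sq (b := (2⁻¹ : ℝ)) (by norm_num)
      (s := (k : ℝ)) (by exact_mod_cast neg_one_lt_zero.trans_le (Nat.cast_nonneg k))
    have h2 := h.abs
    simpa [Real.rpow_natCast, abs_mul, abs_pow, abs_of_pos (Real.exp_pos _)] using h2
  have h2 : Integrable (fun x : ℝ => (1 + |x|) ^ n * Real.exp (-(2⁻¹ : ℝ) * x ^ 2)) := by
    have heq : (fun x : ℝ => (1 + |x|) ^ n * Real.exp (-(2⁻¹ : ℝ) * x ^ 2)) =
        fun x => ∑ k ∈ Finset.range (n + 1),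
          (n.choose k : ℝ) * (|x| ^ k * Real.exp (-(2⁻¹ : ℝ) * x ^ 2)) := by
      funext x
      rw [add_comm (1 : ℝ) |x|, add_pow, Finset.sum_mul]
      exact Finset.sum_congr rfl fun k _ => by ring
    rw [heq]
    exact integrable_finset_sum _ fun k _ => (h1 k).const_mul _
  rw [gaussianReal_of_var_ne_zero 0 one_ne_zero,
    integrable_withDensity_iff (measurable_gaussianPDF 0 1)
      (ae_of_all _ fun x => by simp [gaussianPDF])]
  have heq : (fun x : ℝ => (1 + |x|) ^ n * (gaussianPDF 0 1 x).toReal) =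
      fun x => (Real.sqrt (2 * π))⁻¹ * ((1 + |x|) ^ n * Real.exp (-(2⁻¹ : ℝ) * x ^ 2)) := by
    funext x
    rw [gaussianPDF_def, ENNReal.toReal_ofReal (gaussianPDFReal_nonneg _ _ _),
      gaussianPDFReal_def]
    norm_num
    rw [show -(x ^ 2) / 2 = -(2⁻¹ : ℝ) * x ^ 2 by ring]
    ring
  rw [heq]
  exact h2.const_mul _

lemma sqrt_add_le' {a b : ℝ} (ha : 0 ≤ a) (hb : 0 ≤ b) :
    Real.sqrt (a + b) ≤ Real.sqrt a + Real.sqrt b := by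
  have h : a + b ≤ (Real.sqrt a + Real.sqrt b) ^ 2 := by
    nlinarith [Real.sq_sqrt ha, Real.sq_sqrt hb, Real.sqrt_nonneg a, Real.sqrt_nonneg b,
      mul_nonneg (Real.sqrt_nonneg a) (Real.sqrt_nonneg b)]
  calc Real.sqrt (a + b) ≤ Real.sqrt ((Real.sqrt a + Real.sqrt b) ^ 2) := Real.sqrt_le_sqrt h
    _ = Real.sqrt a + Real.sqrt b := Real.sqrt_sq (by positivity)

lemma abs_sqrt_sub_sqrt {a b : ℝ} (ha : 0 ≤ a) (hb : 0 ≤ b) :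
    |Real.sqrt a - Real.sqrt b| ≤ Real.sqrt |a - b| := by
  rcases le_total b a with h | h
  · rw [abs_of_nonneg (by linarith : (0:ℝ) ≤ a - b),
      abs_of_nonneg (sub_nonneg.mpr (Real.sqrt_le_sqrt h))]
    have h2 : Real.sqrt a ≤ Real.sqrt b + Real.sqrt (a - b) := by
      calc Real.sqrt a = Real.sqrt (b + (a - b)) := by ring_nf
        _ ≤ Real.sqrt b + Real.sqrt (a - b) := sqrt_add_le' hb (by linarith)
    linarith
  · rw [abs_of_nonpos (by linarith : a - b ≤ 0),
      abs_of_nonpos (sub_nonpos.mpr (Real.sqrt_le_sqrt h))]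
    have h2 : Real.sqrt b ≤ Real.sqrt a + Real.sqrt (b - a) := by
      calc Real.sqrt b = Real.sqrt (a + (b - a)) := by ring_nf
        _ ≤ Real.sqrt a + Real.sqrt (b - a) := sqrt_add_le' ha (by linarith)
    rw [neg_sub, neg_sub]
    linarith

lemma rpow_le_one_add_rpow {s r R : ℝ} (hs : 0 ≤ s) (hr : 0 ≤ r) (hrR : r ≤ R) :
    s ^ r ≤ 1 + s ^ R := by
  rcases le_total s 1 with h | h
  · exact (Real.rpow_le_one hs h hr).trans (by nlinarith [Real.rpow_nonneg hs R])
  · exact (Real.rpow_le_rpow_of_exponent_le h hrR).trans (by linarith)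

lemma add_rpow_le {a b r : ℝ} (ha : 0 ≤ a) (hb : 0 ≤ b) (hr : 0 ≤ r) :
    (a + b) ^ r ≤ 2 ^ r * (a ^ r + b ^ r) := by
  rcases le_total a b with h | h
  · calc (a + b) ^ r ≤ (2 * b) ^ r := Real.rpow_le_rpow (by linarith) (by linarith) hr
      _ = 2 ^ r * b ^ r := Real.mul_rpow (by norm_num) hb
      _ ≤ 2 ^ r * (a ^ r + b ^ r) := by
        have := Real.rpow_nonneg ha r
        have h2 : (0:ℝ) ≤ 2 ^ r := Real.rpow_nonneg (by norm_num) r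
        nlinarith
  · calc (a + b) ^ r ≤ (2 * a) ^ r := Real.rpow_le_rpow (by linarith) (by linarith) hr
      _ = 2 ^ r * a ^ r := Real.mul_rpow (by norm_num) ha
      _ ≤ 2 ^ r * (a ^ r + b ^ r) := by
        have := Real.rpow_nonneg hb r
        have h2 : (0:ℝ) ≤ 2 ^ r := Real.rpow_nonneg (by norm_num) r
        nlinarith

lemma mvt_aux {p K : ℝ} (hp : 2 ≤ p) (hK : 0 ≤ K) {f : ℝ → ℝ} (hf : ContDiff ℝ 1 f)
    (hf' : ∀ z, |deriv f z| ≤ K * (1 + |z| ^ (p - 1))) {a b m : ℝ}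
    (ha : |a| ≤ m) (hb : |b| ≤ m) :
    |f a - f b| ≤ K * (1 + m ^ (p - 1)) * |a - b| := by
  have hm : 0 ≤ m := (abs_nonneg a).trans ha
  have := (convex_Icc (-m) m).norm_image_sub_le_of_norm_deriv_le (𝕜 := ℝ) (f := f)
    (fun z _ => (hf.differentiable one_ne_zero).differentiableAt)
    (fun z hz => by
      have hz' : |z| ≤ m := abs_le.mpr ⟨hz.1, hz.2⟩
      calc ‖deriv f z‖ ≤ K * (1 + |z| ^ (p - 1)) := hf' z
        _ ≤ K * (1 + m ^ (p - 1)) := by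
          have := Real.rpow_le_rpow (abs_nonneg z) hz' (by linarith : (0:ℝ) ≤ p - 1)
          nlinarith)
    (Set.mem_Icc.mpr (abs_le.mp hb)) (Set.mem_Icc.mpr (abs_le.mp ha))
  simpa [Real.norm_eq_abs] using this

lemma rpow_le_pow_nat {t T r : ℝ} {N : ℕ} (ht : 0 ≤ t) (htT : t ≤ T) (hT : 1 ≤ T)
    (hr : 0 ≤ r) (hrN : r ≤ (N : ℝ)) : t ^ r ≤ T ^ N := by
  calc t ^ r ≤ T ^ r := Real.rpow_le_rpow ht htT hr
    _ ≤ T ^ (N : ℝ) := Real.rpow_le_rpow_of_exponent_le hT hrN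
    _ = T ^ N := Real.rpow_natCast T N

-- |f (x*u + y*w)| ≤ K * (1 + s^p) * ((1+|u|)*(1+|w|))^N
lemma bound1 {p K : ℝ} (hp : 2 ≤ p) (hK : 0 ≤ K) {f : ℝ → ℝ}
    (hfK : ∀ z, |f z| ≤ K * (1 + |z| ^ p)) {N : ℕ} (hN : p ≤ (N : ℝ))
    {x y s : ℝ} (hx : 0 ≤ x) (hy : 0 ≤ y) (hxs : x ≤ s) (hys : y ≤ s) (u w : ℝ) :
    |f (x * u + y * w)| ≤ K * (1 + s ^ p) * ((1 + |u|) * (1 + |w|)) ^ N := by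
  have hs : 0 ≤ s := hx.trans hxs
  set t := |u| + |w| with hts
  set T := (1 + |u|) * (1 + |w|) with hTs
  have ht : 0 ≤ t := by positivity
  have hT1 : 1 ≤ T := by nlinarith [abs_nonneg u, abs_nonneg w, mul_nonneg (abs_nonneg u) (abs_nonneg w)]
  have htT : t ≤ T := by
    have := abs_nonneg u; have := abs_nonneg w
    nlinarith [mul_nonneg (abs_nonneg u) (abs_nonneg w)]
  have hz : |x * u + y * w| ≤ s * t := by
    calc |x * u + y * w| ≤ |x * u| + |y * w| := abs_add_le _ _
      _ = x * |u| + y * |w| := by rw [abs_mul, abs_mul, abs_of_nonneg hx, abs_of_nonneg hy]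
      _ ≤ s * |u| + s * |w| := by
          have := abs_nonneg u; have := abs_nonneg w
          nlinarith
      _ = s * t := by ring
  have h1 : |x * u + y * w| ^ p ≤ s ^ p * T ^ N := by
    calc |x * u + y * w| ^ p ≤ (s * t) ^ p :=
        Real.rpow_le_rpow (abs_nonneg _) hz (by linarith)
      _ = s ^ p * t ^ p := Real.mul_rpow hs ht
      _ ≤ s ^ p * T ^ N := by
          have := rpow_le_pow_nat (r := p) (N := N) ht htT hT1 (by linarith) hN
          have := Real.rpow_nonneg hs p
          nlinarith
  have hTN : (1:ℝ) ≤ T ^ N := one_le_pow₀ hT1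
  calc |f (x * u + y * w)| ≤ K * (1 + |x * u + y * w| ^ p) := hfK _
    _ ≤ K * (1 + s ^ p) * T ^ N := by
        have hsp := Real.rpow_nonneg hs p
        nlinarith

set_option maxHeartbeats 1000000 in
lemma bound2 {p K : ℝ} (hp : 2 ≤ p) (hK : 0 ≤ K) {f : ℝ → ℝ} (hf : ContDiff ℝ 1 f)
    (hfK' : ∀ z, |deriv f z| ≤ K * (1 + |z| ^ (p - 1))) {N : ℕ} (hN : p ≤ (N : ℝ))
    {x y x' y' s : ℝ} (hx : 0 ≤ x) (hy : 0 ≤ y) (hx' : 0 ≤ x') (hy' : 0 ≤ y')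
    (hxs : x ≤ s) (hys : y ≤ s) (hx's : x' ≤ s) (hy's : y' ≤ s) (u w : ℝ) :
    |f (x * u + y * w) - f (x' * u + y' * w)| ≤
      K * (1 + s ^ (p - 1)) * (|x - x'| + |y - y'|) * ((1 + |u|) * (1 + |w|)) ^ N := by
  have hs : 0 ≤ s := hx.trans hxs
  set t := |u| + |w| with hts
  set T := (1 + |u|) * (1 + |w|) with hTs
  have ht : 0 ≤ t := by positivity
  have hT1 : 1 ≤ T := by
    nlinarith [abs_nonneg u, abs_nonneg w, mul_nonneg (abs_nonneg u) (abs_nonneg w)]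
  have htT : t ≤ T := by
    nlinarith [abs_nonneg u, abs_nonneg w, mul_nonneg (abs_nonneg u) (abs_nonneg w)]
  have habs : ∀ {a b : ℝ}, 0 ≤ a → 0 ≤ b → a ≤ s → b ≤ s → |a * u + b * w| ≤ s * t := by
    intro a b ha hb has hbs
    calc |a * u + b * w| ≤ |a * u| + |b * w| := abs_add_le _ _
      _ = a * |u| + b * |w| := by rw [abs_mul, abs_mul, abs_of_nonneg ha, abs_of_nonneg hb]
      _ ≤ s * |u| + s * |w| := by nlinarith [abs_nonneg u, abs_nonneg w]
      _ = s * t := by ring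
  set δ := |x - x'| + |y - y'| with hδs
  have hδ : 0 ≤ δ := by positivity
  have hdiff : |(x * u + y * w) - (x' * u + y' * w)| ≤ δ * t := by
    calc |(x * u + y * w) - (x' * u + y' * w)| = |(x - x') * u + (y - y') * w| := by ring_nf
      _ ≤ |(x - x') * u| + |(y - y') * w| := abs_add_le _ _
      _ = |x - x'| * |u| + |y - y'| * |w| := by rw [abs_mul, abs_mul]
      _ ≤ δ * |u| + δ * |w| := by
          nlinarith [abs_nonneg u, abs_nonneg w, abs_nonneg (x - x'), abs_nonneg (y - y')]
      _ = δ * t := by ring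
  have hmvt := mvt_aux hp hK hf hfK' (habs hx hy hxs hys) (habs hx' hy' hx's hy's)
  have hTN : (1:ℝ) ≤ T ^ N := one_le_pow₀ hT1
  have hN0 : t ≤ T ^ N := by
    calc t ≤ T := htT
      _ ≤ T ^ N := le_self_pow₀ hT1 (by
          intro h; rw [h] at hN; simp at hN; linarith)
  have hstp : (s * t) ^ (p - 1) * t ≤ s ^ (p - 1) * T ^ N := by
    have e1 : (s * t) ^ (p - 1) = s ^ (p - 1) * t ^ (p - 1) := Real.mul_rpow hs ht
    have e2 : t ^ (p - 1) * t ≤ T ^ N := by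
      have h3 : t ^ (p - 1) ≤ T ^ (p - 1) := Real.rpow_le_rpow ht htT (by linarith)
      have h4 : T ^ (p - 1) * T = T ^ p := by
        rw [← Real.rpow_add_one (by positivity : T ≠ 0) (p - 1)]
        norm_num
      have h5 : T ^ p ≤ T ^ N := rpow_le_pow_nat (le_trans zero_le_one hT1)
        le_rfl hT1 (by linarith) hN
      nlinarith [Real.rpow_nonneg ht (p - 1), Real.rpow_nonneg (le_trans zero_le_one hT1) (p - 1)]
    calc (s * t) ^ (p - 1) * t = s ^ (p - 1) * (t ^ (p - 1) * t) := by rw [e1]; ring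
      _ ≤ s ^ (p - 1) * T ^ N := by nlinarith [Real.rpow_nonneg hs (p - 1)]
  calc |f (x * u + y * w) - f (x' * u + y' * w)|
      ≤ K * (1 + (s * t) ^ (p - 1)) * |(x * u + y * w) - (x' * u + y' * w)| := hmvt
    _ ≤ K * (1 + (s * t) ^ (p - 1)) * (δ * t) :=
        mul_le_mul_of_nonneg_left hdiff
          (mul_nonneg hK (by positivity))
    _ = K * (δ * (t + (s * t) ^ (p - 1) * t)) := by ring
    _ ≤ K * (δ * (T ^ N + s ^ (p - 1) * T ^ N)) := by
        have h6 : t + (s * t) ^ (p - 1) * t ≤ T ^ N + s ^ (p - 1) * T ^ N :=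
          add_le_add hN0 hstp
        exact mul_le_mul_of_nonneg_left
          (mul_le_mul_of_nonneg_left h6 hδ) hK
    _ = K * (1 + s ^ (p - 1)) * δ * T ^ N := by ring

set_option maxHeartbeats 1000000 in
lemma master {p K : ℝ} (hp : 2 ≤ p) (hK : 0 ≤ K) {f : ℝ → ℝ} (hf : ContDiff ℝ 1 f)
    (hfK : ∀ z, |f z| ≤ K * (1 + |z| ^ p))
    (hfK' : ∀ z, |deriv f z| ≤ K * (1 + |z| ^ (p - 1))) {N : ℕ} (hN : p ≤ (N : ℝ))
    {x y x' y' s : ℝ} (hx : 0 ≤ x) (hy : 0 ≤ y) (hx' : 0 ≤ x') (hy' : 0 ≤ y')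
    (hxs : x ≤ s) (hys : y ≤ s) (hx's : x' ≤ s) (hy's : y' ≤ s) :
    |rhoTilde f x y - rhoTilde f x' y'| ≤
      2 * K ^ 2 * ((1 + s ^ (p - 1)) * (1 + s ^ p)) * (|x - x'| + |y - y'|) *
        ((∫ t : ℝ, (1 + |t|) ^ N ∂(gaussianReal 0 1)) ^ 2 *
            (∫ t : ℝ, (1 + |t|) ^ (2 * N) ∂(gaussianReal 0 1)) +
          (∫ t : ℝ, (1 + |t|) ^ N ∂(gaussianReal 0 1)) ^ 4) := by
  have hs : 0 ≤ s := hx.trans hxs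
  set γ := gaussianReal 0 1 with hγ
  set M : ℝ := ∫ t : ℝ, (1 + |t|) ^ N ∂γ with hMdef
  set M' : ℝ := ∫ t : ℝ, (1 + |t|) ^ (2 * N) ∂γ with hM'def
  set δ := |x - x'| + |y - y'| with hδdef
  have hδ : 0 ≤ δ := by positivity
  have hΦ : Integrable (fun t : ℝ => (1 + |t|) ^ N) γ := gauss_poly_integrable N
  have hΨ : Integrable (fun t : ℝ => (1 + |t|) ^ (2 * N)) γ := gauss_poly_integrable (2 * N)
  have hM : 0 ≤ M := integral_nonneg fun t => by positivity
  have hM' : 0 ≤ M' := integral_nonneg fun t => by positivity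
  have hc : Continuous f := hf.continuous
  have hA : 0 ≤ 1 + s ^ (p - 1) := by positivity
  have cont2 : ∀ a b : ℝ, Continuous fun q : ℝ × ℝ => f (a * q.1 + b * q.2) := fun a b =>
    hc.comp ((continuous_const.mul continuous_fst).add (continuous_const.mul continuous_snd))
  have cont3 : ∀ a b : ℝ, Continuous fun q : ℝ × ℝ × ℝ =>
      f (a * q.1 + b * q.2.2) * f (a * q.2.1 + b * q.2.2) := fun a b =>
    ((hc.comp ((continuous_const.mul continuous_fst).add
        (continuous_const.mul (continuous_snd.comp continuous_snd))))).mul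
      ((hc.comp ((continuous_const.mul (continuous_fst.comp continuous_snd)).add
        (continuous_const.mul (continuous_snd.comp continuous_snd)))))
  have hB : 0 ≤ 1 + s ^ p := by positivity
  -- product integrability
  have hΦΦ : Integrable (fun q : ℝ × ℝ => (1 + |q.1|) ^ N * (1 + |q.2|) ^ N) (γ.prod γ) :=
    hΦ.mul_prod hΦ
  have hΦΦΨ : Integrable (fun q : ℝ × ℝ × ℝ =>
      (1 + |q.1|) ^ N * ((1 + |q.2.1|) ^ N * (1 + |q.2.2|) ^ (2 * N)))
      (γ.prod (γ.prod γ)) := hΦ.mul_prod (hΦ.mul_prod hΨ)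
  have iΦΦ : (∫ q : ℝ × ℝ, (1 + |q.1|) ^ N * (1 + |q.2|) ^ N ∂(γ.prod γ)) = M * M :=
    integral_prod_mul (μ := γ) (ν := γ) (fun t : ℝ => (1 + |t|) ^ N) (fun t : ℝ => (1 + |t|) ^ N)
  have iΦΦΨ : (∫ q : ℝ × ℝ × ℝ,
      (1 + |q.1|) ^ N * ((1 + |q.2.1|) ^ N * (1 + |q.2.2|) ^ (2 * N))
      ∂(γ.prod (γ.prod γ))) = M * (M * M') := by
    rw [integral_prod_mul (μ := γ) (ν := γ.prod γ) (fun t : ℝ => (1 + |t|) ^ N)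
      (fun r : ℝ × ℝ => (1 + |r.1|) ^ N * (1 + |r.2|) ^ (2 * N))]
    congr 1
    exact integral_prod_mul (μ := γ) (ν := γ) (fun t : ℝ => (1 + |t|) ^ N)
      (fun t : ℝ => (1 + |t|) ^ (2 * N))
  -- single-variable estimates
  have hIint : ∀ a b : ℝ, 0 ≤ a → 0 ≤ b → a ≤ s → b ≤ s →
      Integrable (fun q : ℝ × ℝ => f (a * q.1 + b * q.2)) (γ.prod γ) := by
    intro a b ha hb has hbs
    refine (hΦΦ.const_mul (K * (1 + s ^ p))).mono'
      (cont2 a b).aestronglyMeasurable (ae_of_all _ fun q => ?_)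
    have h := bound1 hp hK hfK hN ha hb has hbs q.1 q.2
    rw [mul_pow] at h
    simpa [Real.norm_eq_abs, mul_assoc] using h
  have hInorm : ∀ a b : ℝ, 0 ≤ a → 0 ≤ b → a ≤ s → b ≤ s →
      |∫ q : ℝ × ℝ, f (a * q.1 + b * q.2) ∂(γ.prod γ)| ≤ K * (1 + s ^ p) * (M * M) := by
    intro a b ha hb has hbs
    have h := norm_integral_le_of_norm_le
      (f := fun q : ℝ × ℝ => f (a * q.1 + b * q.2)) (hΦΦ.const_mul (K * (1 + s ^ p)))
      (ae_of_all _ fun q : ℝ × ℝ => by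
        have h := bound1 hp hK hfK hN ha hb has hbs q.1 q.2
        rw [mul_pow] at h
        simpa [Real.norm_eq_abs] using h)
    rw [integral_const_mul, iΦΦ] at h
    simpa [Real.norm_eq_abs] using h
  have hIdiff : |(∫ q : ℝ × ℝ, f (x * q.1 + y * q.2) ∂(γ.prod γ)) -
      ∫ q : ℝ × ℝ, f (x' * q.1 + y' * q.2) ∂(γ.prod γ)| ≤
      K * (1 + s ^ (p - 1)) * δ * (M * M) := by
    rw [← integral_sub (hIint x y hx hy hxs hys) (hIint x' y' hx' hy' hx's hy's)]
    have h := norm_integral_le_of_norm_le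
      (f := fun q : ℝ × ℝ => f (x * q.1 + y * q.2) - f (x' * q.1 + y' * q.2))
      (hΦΦ.const_mul (K * (1 + s ^ (p - 1)) * δ))
      (ae_of_all _ fun q : ℝ × ℝ => by
        have h := bound2 hp hK hf hfK' hN hx hy hx' hy' hxs hys hx's hy's q.1 q.2
        rw [mul_pow] at h
        simpa [Real.norm_eq_abs, hδdef] using h)
    rw [integral_const_mul, iΦΦ] at h
    simpa [Real.norm_eq_abs] using h
  -- triple integrals
  have hF3bd : ∀ a b : ℝ, 0 ≤ a → 0 ≤ b → a ≤ s → b ≤ s → ∀ q : ℝ × ℝ × ℝ,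
      |f (a * q.1 + b * q.2.2) * f (a * q.2.1 + b * q.2.2)| ≤
        (K * (1 + s ^ p)) ^ 2 *
          ((1 + |q.1|) ^ N * ((1 + |q.2.1|) ^ N * (1 + |q.2.2|) ^ (2 * N))) := by
    intro a b ha hb has hbs q
    calc |f (a * q.1 + b * q.2.2) * f (a * q.2.1 + b * q.2.2)|
        = |f (a * q.1 + b * q.2.2)| * |f (a * q.2.1 + b * q.2.2)| := abs_mul _ _
      _ ≤ (K * (1 + s ^ p) * ((1 + |q.1|) * (1 + |q.2.2|)) ^ N) *
          (K * (1 + s ^ p) * ((1 + |q.2.1|) * (1 + |q.2.2|)) ^ N) :=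
          mul_le_mul (bound1 hp hK hfK hN ha hb has hbs q.1 q.2.2)
            (bound1 hp hK hfK hN ha hb has hbs q.2.1 q.2.2) (abs_nonneg _)
            (mul_nonneg (mul_nonneg hK hB) (by positivity))
      _ = (K * (1 + s ^ p)) ^ 2 *
          ((1 + |q.1|) ^ N * ((1 + |q.2.1|) ^ N * (1 + |q.2.2|) ^ (2 * N))) := by
          rw [mul_pow, mul_pow, two_mul, pow_add]; ring
  have hF3int : ∀ a b : ℝ, 0 ≤ a → 0 ≤ b → a ≤ s → b ≤ s →
      Integrable (fun q : ℝ × ℝ × ℝ => f (a * q.1 + b * q.2.2) * f (a * q.2.1 + b * q.2.2))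
        (γ.prod (γ.prod γ)) := by
    intro a b ha hb has hbs
    refine (hΦΦΨ.const_mul ((K * (1 + s ^ p)) ^ 2)).mono'
      (cont3 a b).aestronglyMeasurable (ae_of_all _ fun q => ?_)
    simpa [Real.norm_eq_abs, abs_mul] using hF3bd a b ha hb has hbs q
  have hF3diffbd : ∀ q : ℝ × ℝ × ℝ,
      |f (x * q.1 + y * q.2.2) * f (x * q.2.1 + y * q.2.2) -
        f (x' * q.1 + y' * q.2.2) * f (x' * q.2.1 + y' * q.2.2)| ≤
      2 * K ^ 2 * ((1 + s ^ (p - 1)) * (1 + s ^ p)) * δ *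
        ((1 + |q.1|) ^ N * ((1 + |q.2.1|) ^ N * (1 + |q.2.2|) ^ (2 * N))) := by
    intro q
    set A1 := f (x * q.1 + y * q.2.2)
    set B1 := f (x * q.2.1 + y * q.2.2)
    set A2 := f (x' * q.1 + y' * q.2.2)
    set B2 := f (x' * q.2.1 + y' * q.2.2)
    have step : |A1 * B1 - A2 * B2| ≤ |A1 - A2| * |B1| + |A2| * |B1 - B2| := by
      calc |A1 * B1 - A2 * B2| = |(A1 - A2) * B1 + A2 * (B1 - B2)| := by ring_nf
        _ ≤ |(A1 - A2) * B1| + |A2 * (B1 - B2)| := abs_add_le _ _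
        _ = |A1 - A2| * |B1| + |A2| * |B1 - B2| := by rw [abs_mul, abs_mul]
    have t1 : |A1 - A2| * |B1| ≤
        (K * (1 + s ^ (p - 1)) * δ * ((1 + |q.1|) * (1 + |q.2.2|)) ^ N) *
        (K * (1 + s ^ p) * ((1 + |q.2.1|) * (1 + |q.2.2|)) ^ N) :=
      mul_le_mul (bound2 hp hK hf hfK' hN hx hy hx' hy' hxs hys hx's hy's q.1 q.2.2)
        (bound1 hp hK hfK hN hx hy hxs hys q.2.1 q.2.2) (abs_nonneg _)
        (by positivity)
    have t2 : |A2| * |B1 - B2| ≤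
        (K * (1 + s ^ p) * ((1 + |q.1|) * (1 + |q.2.2|)) ^ N) *
        (K * (1 + s ^ (p - 1)) * δ * ((1 + |q.2.1|) * (1 + |q.2.2|)) ^ N) :=
      mul_le_mul (bound1 hp hK hfK hN hx' hy' hx's hy's q.1 q.2.2)
        (bound2 hp hK hf hfK' hN hx hy hx' hy' hxs hys hx's hy's q.2.1 q.2.2)
        (abs_nonneg _) (by positivity)
    have erw : (K * (1 + s ^ (p - 1)) * δ * ((1 + |q.1|) * (1 + |q.2.2|)) ^ N) *
        (K * (1 + s ^ p) * ((1 + |q.2.1|) * (1 + |q.2.2|)) ^ N) +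
        (K * (1 + s ^ p) * ((1 + |q.1|) * (1 + |q.2.2|)) ^ N) *
        (K * (1 + s ^ (p - 1)) * δ * ((1 + |q.2.1|) * (1 + |q.2.2|)) ^ N) =
        2 * K ^ 2 * ((1 + s ^ (p - 1)) * (1 + s ^ p)) * δ *
        ((1 + |q.1|) ^ N * ((1 + |q.2.1|) ^ N * (1 + |q.2.2|) ^ (2 * N))) := by
      rw [mul_pow, mul_pow, show 2 * N = N + N from two_mul N, pow_add]; ring
    linarith [step, t1, t2, erw ▸ add_le_add t1 t2]
  have hTdiff : |(∫ q : ℝ × ℝ × ℝ, f (x * q.1 + y * q.2.2) * f (x * q.2.1 + y * q.2.2)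
      ∂(γ.prod (γ.prod γ))) -
      ∫ q : ℝ × ℝ × ℝ, f (x' * q.1 + y' * q.2.2) * f (x' * q.2.1 + y' * q.2.2)
      ∂(γ.prod (γ.prod γ))| ≤
      2 * K ^ 2 * ((1 + s ^ (p - 1)) * (1 + s ^ p)) * δ * (M * (M * M')) := by
    rw [← integral_sub (hF3int x y hx hy hxs hys) (hF3int x' y' hx' hy' hx's hy's)]
    have h := norm_integral_le_of_norm_le
      (f := fun q : ℝ × ℝ × ℝ => f (x * q.1 + y * q.2.2) * f (x * q.2.1 + y * q.2.2) -
        f (x' * q.1 + y' * q.2.2) * f (x' * q.2.1 + y' * q.2.2))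
      (hΦΦΨ.const_mul (2 * K ^ 2 * ((1 + s ^ (p - 1)) * (1 + s ^ p)) * δ))
      (ae_of_all _ fun q : ℝ × ℝ × ℝ => by
        simpa [Real.norm_eq_abs] using hF3diffbd q)
    rw [integral_const_mul, iΦΦΨ] at h
    simpa [Real.norm_eq_abs] using h
  -- assemble
  set I1 := ∫ q : ℝ × ℝ, f (x * q.1 + y * q.2) ∂(γ.prod γ) with hI1
  set I2 := ∫ q : ℝ × ℝ, f (x' * q.1 + y' * q.2) ∂(γ.prod γ) with hI2
  have hIsq : |I1 * I1 - I2 * I2| ≤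
      2 * K ^ 2 * ((1 + s ^ (p - 1)) * (1 + s ^ p)) * δ * (M * M * (M * M)) := by
    have e : I1 * I1 - I2 * I2 = (I1 - I2) * I1 + I2 * (I1 - I2) := by ring
    have h1 := hInorm x y hx hy hxs hys
    have h2 := hInorm x' y' hx' hy' hx's hy's
    have hd := hIdiff
    calc |I1 * I1 - I2 * I2| ≤ |I1 - I2| * |I1| + |I2| * |I1 - I2| := by
          rw [e]
          refine (abs_add_le _ _).trans ?_
          rw [abs_mul, abs_mul]
      _ ≤ (K * (1 + s ^ (p - 1)) * δ * (M * M)) * (K * (1 + s ^ p) * (M * M)) +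
          (K * (1 + s ^ p) * (M * M)) * (K * (1 + s ^ (p - 1)) * δ * (M * M)) := by
          refine add_le_add (mul_le_mul hd h1 (abs_nonneg _) (by positivity))
            (mul_le_mul h2 hd (abs_nonneg _) (by positivity))
      _ = 2 * K ^ 2 * ((1 + s ^ (p - 1)) * (1 + s ^ p)) * δ * (M * M * (M * M)) := by ring
  have hrt : rhoTilde f x y - rhoTilde f x' y' =
      ((∫ q : ℝ × ℝ × ℝ, f (x * q.1 + y * q.2.2) * f (x * q.2.1 + y * q.2.2)
        ∂(γ.prod (γ.prod γ))) -
       ∫ q : ℝ × ℝ × ℝ, f (x' * q.1 + y' * q.2.2) * f (x' * q.2.1 + y' * q.2.2)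
        ∂(γ.prod (γ.prod γ))) - (I1 * I1 - I2 * I2) := by
    simp only [rhoTilde, hI1, hI2, hγ]
    ring
  rw [hrt]
  calc |_ - (I1 * I1 - I2 * I2)| ≤ _ + |I1 * I1 - I2 * I2| := abs_sub _ _
    _ ≤ 2 * K ^ 2 * ((1 + s ^ (p - 1)) * (1 + s ^ p)) * δ * (M * (M * M')) +
        2 * K ^ 2 * ((1 + s ^ (p - 1)) * (1 + s ^ p)) * δ * (M * M * (M * M)) :=
        add_le_add hTdiff hIsq
    _ = 2 * K ^ 2 * ((1 + s ^ (p - 1)) * (1 + s ^ p)) * δ * (M ^ 2 * M' + M ^ 4) := by ring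

set_option maxHeartbeats 1000000 in
theorem stmt_14 (p K : ℝ) (hp : 2 ≤ p) :
    ∃ C : ℝ, ∀ f : ℝ → ℝ, ContDiff ℝ 1 f →
      (∀ z, |f z| ≤ K * (1 + |z| ^ p)) →
      (∀ z, |deriv f z| ≤ K * (1 + |z| ^ (p - 1))) →
      ∀ v v' c c' : ℝ, 0 ≤ v → 0 ≤ v' → 0 ≤ c → c ≤ v → 0 ≤ c' → c' ≤ v' →
        |rhoCov f v c - rhoCov f v' c'| ≤
          C * (1 + v ^ (p - 1 / 2) + v' ^ (p - 1 / 2))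
            * (Real.sqrt |v - v'| + Real.sqrt |c - c'|) := by
  set N : ℕ := ⌈p⌉₊ with hNdef
  set M : ℝ := ∫ t : ℝ, (1 + |t|) ^ N ∂(gaussianReal 0 1) with hMdef
  set M' : ℝ := ∫ t : ℝ, (1 + |t|) ^ (2 * N) ∂(gaussianReal 0 1) with hM'def
  refine ⟨12 * 2 ^ (2 * p - 1) * K ^ 2 * (M ^ 2 * M' + M ^ 4), ?_⟩
  intro f hf hfK hfK' v v' c c' hv hv' hc hcv hc' hc'v'
  have hK : 0 ≤ K := by
    have h0 := hfK 0
    rw [abs_zero, Real.zero_rpow (by linarith : p ≠ 0)] at h0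
    have := abs_nonneg (f 0)
    linarith
  have hN : p ≤ (N : ℝ) := Nat.le_ceil p
  have hM : 0 ≤ M := integral_nonneg fun t => by positivity
  have hM' : 0 ≤ M' := integral_nonneg fun t => by positivity
  set s := Real.sqrt v + Real.sqrt v' with hsdef
  have hs : 0 ≤ s := by positivity
  have hx : (0:ℝ) ≤ Real.sqrt (v - c) := Real.sqrt_nonneg _
  have hy : (0:ℝ) ≤ Real.sqrt c := Real.sqrt_nonneg _
  have hx' : (0:ℝ) ≤ Real.sqrt (v' - c') := Real.sqrt_nonneg _
  have hy' : (0:ℝ) ≤ Real.sqrt c' := Real.sqrt_nonneg _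
  have hxs : Real.sqrt (v - c) ≤ s := by
    calc Real.sqrt (v - c) ≤ Real.sqrt v := Real.sqrt_le_sqrt (by linarith)
      _ ≤ s := by simp [hsdef]
  have hys : Real.sqrt c ≤ s := by
    calc Real.sqrt c ≤ Real.sqrt v := Real.sqrt_le_sqrt (by linarith)
      _ ≤ s := by simp [hsdef]
  have hx's : Real.sqrt (v' - c') ≤ s := by
    calc Real.sqrt (v' - c') ≤ Real.sqrt v' := Real.sqrt_le_sqrt (by linarith)
      _ ≤ s := by simp [hsdef]
  have hy's : Real.sqrt c' ≤ s := by
    calc Real.sqrt c' ≤ Real.sqrt v' := Real.sqrt_le_sqrt (by linarith)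
      _ ≤ s := by simp [hsdef]
  have hmaster := master hp hK hf hfK hfK' hN hx hy hx' hy' hxs hys hx's hy's
  set E := 1 + v ^ (p - 1 / 2) + v' ^ (p - 1 / 2) with hEdef
  set R := Real.sqrt |v - v'| + Real.sqrt |c - c'| with hRdef
  have hEp : 0 ≤ v ^ (p - 1 / 2) := Real.rpow_nonneg hv _
  have hEp' : 0 ≤ v' ^ (p - 1 / 2) := Real.rpow_nonneg hv' _
  have hE : 0 ≤ E := by rw [hEdef]; linarith
  have hR : 0 ≤ R := by positivity
  have h2p : (0:ℝ) < 2 ^ (2 * p - 1) := Real.rpow_pos_of_pos two_pos _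
  have h2p1 : (1:ℝ) ≤ 2 ^ (2 * p - 1) := by
    calc (1:ℝ) = 2 ^ (0:ℝ) := (Real.rpow_zero 2).symm
      _ ≤ 2 ^ (2 * p - 1) := Real.rpow_le_rpow_of_exponent_le one_le_two (by linarith)
  -- bound on (1+s^(p-1))*(1+s^p)
  have hsE : (1 + s ^ (p - 1)) * (1 + s ^ p) ≤ 3 * (2 ^ (2 * p - 1) * E) := by
    have e2p : s ^ ((2:ℝ) * p - 1) = s ^ (p - 1) * s ^ p := by
      rw [show (2:ℝ) * p - 1 = (p - 1) + p by ring,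
        Real.rpow_add' hs (by intro h; nlinarith)]
    have ha : s ^ (p - 1) ≤ 1 + s ^ (2 * p - 1) :=
      rpow_le_one_add_rpow hs (by linarith) (by linarith)
    have hb : s ^ p ≤ 1 + s ^ (2 * p - 1) :=
      rpow_le_one_add_rpow hs (by linarith) (by linarith)
    have hsplit : s ^ (2 * p - 1) ≤ 2 ^ (2 * p - 1) * (v ^ (p - 1 / 2) + v' ^ (p - 1 / 2)) := by
      have h := add_rpow_le (Real.sqrt_nonneg v) (Real.sqrt_nonneg v')
        (by linarith : (0:ℝ) ≤ 2 * p - 1)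
      have hv2 : Real.sqrt v ^ (2 * p - 1) = v ^ (p - 1 / 2) := by
        rw [Real.sqrt_eq_rpow, ← Real.rpow_mul hv,
          show (1 / 2 : ℝ) * (2 * p - 1) = p - 1 / 2 by ring]
      have hv2' : Real.sqrt v' ^ (2 * p - 1) = v' ^ (p - 1 / 2) := by
        rw [Real.sqrt_eq_rpow, ← Real.rpow_mul hv',
          show (1 / 2 : ℝ) * (2 * p - 1) = p - 1 / 2 by ring]
      rw [hv2, hv2'] at h
      exact h
    have hsnn : 0 ≤ s ^ (p - 1) := Real.rpow_nonneg hs _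
    have hsnn' : 0 ≤ s ^ p := Real.rpow_nonneg hs _
    have hsnn'' : 0 ≤ s ^ (2 * p - 1) := Real.rpow_nonneg hs _
    simp only [hEdef]
    nlinarith [e2p, ha, hb, hsplit, h2p1]
  -- bound on δ
  have hδE : |Real.sqrt (v - c) - Real.sqrt (v' - c')| + |Real.sqrt c - Real.sqrt c'| ≤
      2 * R := by
    have h1 : |Real.sqrt c - Real.sqrt c'| ≤ Real.sqrt |c - c'| := abs_sqrt_sub_sqrt hc hc'
    have h2 : |Real.sqrt (v - c) - Real.sqrt (v' - c')| ≤
        Real.sqrt |v - v'| + Real.sqrt |c - c'| := by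
      calc |Real.sqrt (v - c) - Real.sqrt (v' - c')| ≤ Real.sqrt |(v - c) - (v' - c')| :=
          abs_sqrt_sub_sqrt (by linarith) (by linarith)
        _ ≤ Real.sqrt (|v - v'| + |c - c'|) := Real.sqrt_le_sqrt (by
            rw [show (v - c) - (v' - c') = (v - v') - (c - c') by ring]
            exact abs_sub _ _)
        _ ≤ Real.sqrt |v - v'| + Real.sqrt |c - c'| :=
          sqrt_add_le' (abs_nonneg _) (abs_nonneg _)
    have := Real.sqrt_nonneg |c - c'|
    have := Real.sqrt_nonneg |v - v'|
    rw [hRdef]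
    linarith
  have hBnn : 0 ≤ M ^ 2 * M' + M ^ 4 :=
    add_nonneg (mul_nonneg (sq_nonneg M) hM') (by positivity)
  have key : (1 + s ^ (p - 1)) * (1 + s ^ p) *
      (|Real.sqrt (v - c) - Real.sqrt (v' - c')| + |Real.sqrt c - Real.sqrt c'|) ≤
      3 * (2 ^ (2 * p - 1) * E) * (2 * R) := by
    have hEpos : (0:ℝ) < E := by rw [hEdef]; linarith
    refine mul_le_mul hsE hδE (by positivity) ?_
    have : 0 ≤ 2 ^ (2 * p - 1) * E := le_of_lt (mul_pos h2p hEpos)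
    linarith
  show |rhoTilde f (Real.sqrt (v - c)) (Real.sqrt c) -
      rhoTilde f (Real.sqrt (v' - c')) (Real.sqrt c')| ≤ _
  calc |rhoTilde f (Real.sqrt (v - c)) (Real.sqrt c) -
      rhoTilde f (Real.sqrt (v' - c')) (Real.sqrt c')|
      ≤ 2 * K ^ 2 * ((1 + s ^ (p - 1)) * (1 + s ^ p)) *
        (|Real.sqrt (v - c) - Real.sqrt (v' - c')| + |Real.sqrt c - Real.sqrt c'|) *
        (M ^ 2 * M' + M ^ 4) := hmaster
    _ = (2 * K ^ 2 * (M ^ 2 * M' + M ^ 4)) * ((1 + s ^ (p - 1)) * (1 + s ^ p) *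
        (|Real.sqrt (v - c) - Real.sqrt (v' - c')| + |Real.sqrt c - Real.sqrt c'|)) := by
        ring
    _ ≤ (2 * K ^ 2 * (M ^ 2 * M' + M ^ 4)) * (3 * (2 ^ (2 * p - 1) * E) * (2 * R)) := by
        refine mul_le_mul_of_nonneg_left key (by positivity)
    _ = 12 * 2 ^ (2 * p - 1) * K ^ 2 * (M ^ 2 * M' + M ^ 4) * E * R := by ring
end
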